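/- arXiv:2503.13035 — 4 statements merged into one kernel-verified Lean document; each statement's English description precedes it below -/
import Mathlib

section
/- Let k > 1 be an integer and let W : ℝ → ℝ be continuous, nonnegative and satisfy (H2). Then there exists a constant q* > 0, independent of the interval, such that for every bounded open interval (a,b) with a < b, every real number q < q*, and every function u : ℝ → ℝ of class C^k, one has q · ∫_a^b |u^{(k-1)}(t)|² dt ≤ (b-a)^{-2(k-1)} · ∫_a^b W(u(t)) dt + (b-a)² · ∫_a^b |u^{(k)}(t)|² dt. -/
open MeasureTheory

set_option maxHeartbeats 2000000

open intervalIntegral Set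

lemma intnn {g : ℝ → ℝ} {a b : ℝ} (hab : a ≤ b) : 0 ≤ ∫ t in a..b, (g t)^2 :=
  intervalIntegral.integral_nonneg hab (fun x _ => sq_nonneg _)

-- min point ≤ average, for nonneg continuous f
lemma min_le_avg {f : ℝ → ℝ} (hf : Continuous f) {a b : ℝ} (hab : a < b) :
    ∃ x ∈ Set.Icc a b, f x * (b - a) ≤ ∫ t in a..b, f t := by
  obtain ⟨x, hx, hmin⟩ := isCompact_Icc.exists_isMinOn (nonempty_Icc.2 hab.le) hf.continuousOn
  refine ⟨x, hx, ?_⟩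
  have : ∫ t in a..b, f x ≤ ∫ t in a..b, f t := by
    apply intervalIntegral.integral_mono_on hab.le (by simp) (hf.intervalIntegrable _ _)
    intro t ht
    exact hmin ht
  simpa [mul_comm] using this

-- Cauchy-Schwarz: (∫|g|)² ≤ (b-a) ∫ g²
lemma cs_abs {g : ℝ → ℝ} (hg : Continuous g) {a b : ℝ} (hab : a ≤ b) :
    (∫ t in a..b, |g t|)^2 ≤ (b - a) * ∫ t in a..b, (g t)^2 := by
  rcases eq_or_lt_of_le hab with rfl | hab'
  · simp
  have hL : (0:ℝ) < b - a := by linarith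
  set c : ℝ := (∫ t in a..b, |g t|) / (b - a) with hc
  have h0 : 0 ≤ ∫ t in a..b, (|g t| - c)^2 :=
    intervalIntegral.integral_nonneg hab (fun x _ => sq_nonneg _)
  have hint : ∫ t in a..b, (|g t| - c)^2
      = (∫ t in a..b, (g t)^2) - 2*c*(∫ t in a..b, |g t|) + c^2*(b-a) := by
    have h1 : IntervalIntegrable (fun t => (g t)^2) volume a b :=
      ((hg.pow 2)).intervalIntegrable _ _
    have h2 : IntervalIntegrable (fun t => |g t|) volume a b :=
      (hg.abs).intervalIntegrable _ _
    have : ∀ t : ℝ, (|g t| - c)^2 = (g t)^2 - 2*c*|g t| + c^2 := by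
      intro t; rw [sub_sq]; rw [sq_abs]; ring
    simp_rw [this]
    rw [intervalIntegral.integral_add (h1.sub ((h2.const_mul _))) intervalIntegrable_const,
       intervalIntegral.integral_sub h1 (h2.const_mul _),
       intervalIntegral.integral_const_mul, intervalIntegral.integral_const]
    simp only [smul_eq_mul]
    field_simp
  rw [hint] at h0
  have hc2 : c * (b - a) = ∫ t in a..b, |g t| := by rw [hc, div_mul_cancel₀ _ (ne_of_gt hL)]
  nlinarith [sq_nonneg c, h0]



-- sub-interval monotonicity for squares
lemma sq_int_mono {g : ℝ → ℝ} (hg : Continuous g) {a b c d : ℝ} (hca : c ≤ a) (hab : a ≤ b)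
    (hbd : b ≤ d) : (∫ t in a..b, (g t)^2) ≤ ∫ t in c..d, (g t)^2 :=
  intervalIntegral.integral_mono_interval hca hab hbd
    (Filter.Eventually.of_forall (fun x => sq_nonneg _)) ((hg.pow 2).intervalIntegrable _ _)

lemma step {f : ℝ → ℝ} (hd1 : Differentiable ℝ f) (hd2 : Differentiable ℝ (deriv f))
    (hc2 : Continuous (deriv (deriv f))) {a b : ℝ} (hab : a < b) :
    ∫ t in a..b, (deriv f t)^2 ≤ 216 * ((b-a)^2)⁻¹ * (∫ t in a..b, (f t)^2)
      + 2 * (b-a)^2 * ∫ t in a..b, (deriv (deriv f) t)^2 := by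
  have hcf : Continuous f := hd1.continuous
  have hcf1 : Continuous (deriv f) := hd2.continuous
  obtain ⟨L, hL⟩ : ∃ L : ℝ, L = b - a := ⟨_, rfl⟩
  have hL0 : 0 < L := by rw [hL]; linarith
  obtain ⟨I0, hI0⟩ : ∃ I0 : ℝ, I0 = ∫ t in a..b, (f t)^2 := ⟨_, rfl⟩
  obtain ⟨I2, hI2⟩ : ∃ I2 : ℝ, I2 = ∫ t in a..b, (deriv (deriv f) t)^2 := ⟨_, rfl⟩
  rw [← hL, ← hI0, ← hI2]
  have hI0nn : 0 ≤ I0 := hI0 ▸ intnn hab.le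
  have hI2nn : 0 ≤ I2 := hI2 ▸ intnn hab.le
  obtain ⟨x, hx, hxval⟩ := min_le_avg (f := fun t => (f t)^2) (hcf.pow 2) (a := a) (b := a + L/3)
    (by linarith)
  obtain ⟨y, hy, hyval⟩ := min_le_avg (f := fun t => (f t)^2) (hcf.pow 2) (a := b - L/3) (b := b)
    (by linarith)
  have hx2 : (f x)^2 * (L/3) ≤ I0 := by
    have h := sq_int_mono hcf (le_refl a) (by linarith : a ≤ a + L/3) (by linarith : a + L/3 ≤ b)
      (g := f)
    rw [hI0]
    calc (f x)^2 * (L/3) = (f x)^2 * ((a + L/3) - a) := by ring_nf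
    _ ≤ ∫ t in a..(a + L/3), (f t)^2 := hxval
    _ ≤ ∫ t in a..b, (f t)^2 := h
  have hy2 : (f y)^2 * (L/3) ≤ I0 := by
    have h := sq_int_mono hcf (by linarith : a ≤ b - L/3) (by linarith : b - L/3 ≤ b) (le_refl b)
      (g := f)
    rw [hI0]
    calc (f y)^2 * (L/3) = (f y)^2 * (b - (b - L/3)) := by ring_nf
    _ ≤ ∫ t in (b - L/3)..b, (f t)^2 := hyval
    _ ≤ ∫ t in a..b, (f t)^2 := h
  have hxy : x < y := by
    have := hx.2; have := hy.1; linarith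
  obtain ⟨ξ, hξ, hξval⟩ := exists_hasDerivAt_eq_slope f (deriv f) hxy
    (hcf.continuousOn) (fun z _ => (hd1 z).hasDerivAt)
  have hyx : L/3 ≤ y - x := by have := hx.2; have := hy.1; linarith
  have hξsq : (deriv f ξ)^2 * L^3 ≤ 108 * I0 := by
    have h1 : (deriv f ξ)^2 * (y - x)^2 = (f y - f x)^2 := by
      rw [hξval, div_pow]
      exact div_mul_cancel₀ _ (ne_of_gt (pow_pos (by linarith) 2))
    have h2 : (f y - f x)^2 ≤ 2 * (f x)^2 + 2 * (f y)^2 := by nlinarith [sq_nonneg (f y + f x)]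
    -- (f x)^2 ≤ 3 I0 / L, so (f y - f x)^2 * L ≤ 12 I0
    have h3 : (f y - f x)^2 * L ≤ 12 * I0 := by nlinarith
    -- (deriv f ξ)^2 * (L/3)^2 ≤ (f y - f x)^2
    have h5 : (deriv f ξ)^2 * (L/3)^2 ≤ (f y - f x)^2 := by
      rw [← h1]
      apply mul_le_mul_of_nonneg_left _ (sq_nonneg _)
      nlinarith
    have h6 : (deriv f ξ)^2 * (L/3)^2 * L ≤ (f y - f x)^2 * L :=
      mul_le_mul_of_nonneg_right h5 hL0.le
    nlinarith [h6, h3]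
  have hξab : ξ ∈ Set.Icc a b := by
    constructor
    · have := hξ.1; have := hx.1; linarith
    · have := hξ.2; have := hy.2; linarith
  have hptwise : ∀ t ∈ Set.Icc a b, (deriv f t)^2 ≤ 2 * (deriv f ξ)^2 + 2 * L * I2 := by
    intro t ht
    have hftc : deriv f t - deriv f ξ = ∫ s in ξ..t, deriv (deriv f) s := by
      rw [intervalIntegral.integral_deriv_eq_sub (fun z _ => hd2 z)
        (hc2.intervalIntegrable _ _)]
    have habs : |deriv f t - deriv f ξ| ≤ ∫ s in a..b, |deriv (deriv f) s| := by
      rw [hftc]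
      rcases le_total ξ t with h | h
      · calc |∫ s in ξ..t, deriv (deriv f) s| ≤ ∫ s in ξ..t, |deriv (deriv f) s| :=
            intervalIntegral.abs_integral_le_integral_abs h
          _ ≤ ∫ s in a..b, |deriv (deriv f) s| :=
            intervalIntegral.integral_mono_interval hξab.1 h ht.2
              (Filter.Eventually.of_forall (fun z => abs_nonneg _))
              ((hc2.abs).intervalIntegrable _ _)
      · rw [intervalIntegral.integral_symm, abs_neg]
        calc |∫ s in t..ξ, deriv (deriv f) s| ≤ ∫ s in t..ξ, |deriv (deriv f) s| :=
            intervalIntegral.abs_integral_le_integral_abs h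
          _ ≤ ∫ s in a..b, |deriv (deriv f) s| :=
            intervalIntegral.integral_mono_interval ht.1 h hξab.2
              (Filter.Eventually.of_forall (fun z => abs_nonneg _))
              ((hc2.abs).intervalIntegrable _ _)
    have hcs : (∫ s in a..b, |deriv (deriv f) s|)^2 ≤ L * I2 := by
      rw [hI2, hL]; exact cs_abs hc2 hab.le
    have h6 : (deriv f t - deriv f ξ)^2 ≤ L * I2 := by
      calc (deriv f t - deriv f ξ)^2 = |deriv f t - deriv f ξ|^2 := (sq_abs _).symm
        _ ≤ (∫ s in a..b, |deriv (deriv f) s|)^2 := by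
            apply pow_le_pow_left₀ (abs_nonneg _) habs
        _ ≤ L * I2 := hcs
    nlinarith [sq_nonneg (deriv f t - 2 * deriv f ξ)]
  have hint : ∫ t in a..b, (deriv f t)^2 ≤ (2 * (deriv f ξ)^2 + 2 * L * I2) * L := by
    have h := intervalIntegral.integral_mono_on (μ := volume) hab.le
      ((hcf1.pow 2).intervalIntegrable a b) intervalIntegrable_const hptwise
    rw [intervalIntegral.integral_const, smul_eq_mul, ← hL] at h
    simp only [Pi.pow_apply] at h; linarith [h]
  have hfin : (2 * (deriv f ξ)^2 + 2 * L * I2) * L * L^2 ≤ (216 * (L^2)⁻¹ * I0 + 2 * L^2 * I2) * L^2 := by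
    have e1 : (L^2)⁻¹ * L^2 = 1 := inv_mul_cancel₀ (by positivity)
    have expand : (216 * (L^2)⁻¹ * I0 + 2 * L^2 * I2) * L^2 = 216 * I0 * ((L^2)⁻¹ * L^2) + 2 * L^4 * I2 := by ring
    rw [expand, e1]
    nlinarith [hξsq, hI2nn, hL0]
  have hL2 : (0:ℝ) < L^2 := by positivity
  calc ∫ t in a..b, (deriv f t)^2 ≤ (2 * (deriv f ξ)^2 + 2 * L * I2) * L := hint
    _ ≤ 216 * (L^2)⁻¹ * I0 + 2 * L^2 * I2 := by
        exact le_of_mul_le_mul_right hfin hL2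

lemma step_subdiv {f : ℝ → ℝ} (hd1 : Differentiable ℝ f) (hd2 : Differentiable ℝ (deriv f))
    (hc2 : Continuous (deriv (deriv f))) {a b : ℝ} (hab : a < b) (n : ℕ) (hn : 0 < n) :
    ∫ t in a..b, (deriv f t)^2 ≤ 216 * (n:ℝ)^2 * ((b-a)^2)⁻¹ * (∫ t in a..b, (f t)^2)
      + 2 * ((n:ℝ)^2)⁻¹ * (b-a)^2 * ∫ t in a..b, (deriv (deriv f) t)^2 := by
  have hcf : Continuous f := hd1.continuous
  have hcf1 : Continuous (deriv f) := hd2.continuous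
  have hn0 : (0:ℝ) < n := Nat.cast_pos.mpr hn
  obtain ⟨L, hL⟩ : ∃ L : ℝ, L = b - a := ⟨_, rfl⟩
  have hL0 : 0 < L := by rw [hL]; linarith
  rw [← hL]
  obtain ⟨c, hc⟩ : ∃ c : ℕ → ℝ, c = fun i : ℕ => a + (i : ℝ) * (L / n) := ⟨_, rfl⟩
  have hck : ∀ k : ℕ, c (k+1) - c k = L / n := by
    intro k; rw [hc]; push_cast; ring
  have hcmono : ∀ k : ℕ, c k < c (k+1) := by
    intro k
    have h1 : 0 < L / n := by positivity
    have h2 := hck k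
    linarith
  have hc0 : c 0 = a := by rw [hc]; simp
  have hcn : c n = b := by
    rw [hc]; field_simp; rw [hL]; ring
  -- sums of adjacent integrals
  have hsum : ∀ g : ℝ → ℝ, Continuous g →
      (∑ k ∈ Finset.range n, ∫ t in (c k)..(c (k+1)), (g t)^2) = ∫ t in a..b, (g t)^2 := by
    intro g hg
    have := intervalIntegral.sum_integral_adjacent_intervals (μ := volume) (a := c) (n := n)
      (f := fun t => (g t)^2) (fun k _ => (hg.pow 2).intervalIntegrable _ _)
    rw [hc0, hcn] at this
    exact this
  rw [← hsum f hcf, ← hsum (deriv f) hcf1, ← hsum (deriv (deriv f)) hc2]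
  have hbound : ∀ k ∈ Finset.range n,
      (∫ t in (c k)..(c (k+1)), (deriv f t)^2) ≤
        216 * ((L/n)^2)⁻¹ * (∫ t in (c k)..(c (k+1)), (f t)^2)
          + 2 * (L/n)^2 * ∫ t in (c k)..(c (k+1)), (deriv (deriv f) t)^2 := by
    intro k _
    have h := step hd1 hd2 hc2 (hcmono k)
    rw [hck k] at h
    exact h
  calc (∑ k ∈ Finset.range n, ∫ t in (c k)..(c (k+1)), (deriv f t)^2)
      ≤ ∑ k ∈ Finset.range n, (216 * ((L/n)^2)⁻¹ * (∫ t in (c k)..(c (k+1)), (f t)^2)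
          + 2 * (L/n)^2 * ∫ t in (c k)..(c (k+1)), (deriv (deriv f) t)^2) :=
        Finset.sum_le_sum hbound
    _ = 216 * ((L/n)^2)⁻¹ * (∑ k ∈ Finset.range n, ∫ t in (c k)..(c (k+1)), (f t)^2)
          + 2 * (L/n)^2 * ∑ k ∈ Finset.range n, ∫ t in (c k)..(c (k+1)), (deriv (deriv f) t)^2 := by
        rw [Finset.sum_add_distrib, ← Finset.mul_sum, ← Finset.mul_sum]
    _ = 216 * (n:ℝ)^2 * (L^2)⁻¹ * (∑ k ∈ Finset.range n, ∫ t in (c k)..(c (k+1)), (f t)^2)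
          + 2 * ((n:ℝ)^2)⁻¹ * L^2 * ∑ k ∈ Finset.range n, ∫ t in (c k)..(c (k+1)), (deriv (deriv f) t)^2 := by
        have e1 : ((L/n)^2)⁻¹ = (n:ℝ)^2 * (L^2)⁻¹ := by
          field_simp
        have e2 : (L/n)^2 = ((n:ℝ)^2)⁻¹ * L^2 := by
          field_simp
        rw [e1, e2]; ring

lemma step_eps {δ : ℝ} (hδ : 0 < δ) : ∃ C : ℝ, 0 < C ∧
    ∀ f : ℝ → ℝ, Differentiable ℝ f → Differentiable ℝ (deriv f) →
      Continuous (deriv (deriv f)) → ∀ a b : ℝ, a < b →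
      ∫ t in a..b, (deriv f t)^2 ≤ C * ((b-a)^2)⁻¹ * (∫ t in a..b, (f t)^2)
        + δ * (b-a)^2 * ∫ t in a..b, (deriv (deriv f) t)^2 := by
  obtain ⟨n, hn⟩ := exists_nat_gt (Real.sqrt (2/δ))
  have hsq : Real.sqrt (2/δ) ≥ 0 := Real.sqrt_nonneg _
  have hn0 : 0 < n := by
    by_contra h
    push_neg at h
    interval_cases n
    simp only [Nat.cast_zero] at hn
    exact absurd hn (not_lt.mpr hsq)
  have hn0' : (0:ℝ) < n := Nat.cast_pos.mpr hn0
  have hkey : 2 * ((n:ℝ)^2)⁻¹ ≤ δ := by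
    have h1 : 2/δ < (n:ℝ)^2 := by
      nlinarith [Real.sq_sqrt (le_of_lt (show (0:ℝ) < 2/δ by positivity)), hn, hsq]
    have h2 : (0:ℝ) < (n:ℝ)^2 := by positivity
    rw [div_lt_iff₀ hδ] at h1
    rw [mul_comm, inv_mul_le_iff₀ h2]
    nlinarith
  refine ⟨216 * (n:ℝ)^2, by positivity, ?_⟩
  intro f hd1 hd2 hc2 a b hab
  have h := step_subdiv hd1 hd2 hc2 hab n hn0
  have hI2 : 0 ≤ ∫ t in a..b, (deriv (deriv f) t)^2 := intnn hab.le
  have hL2 : 0 ≤ (b-a)^2 := sq_nonneg _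
  nlinarith [h, mul_le_mul_of_nonneg_right hkey (mul_nonneg hL2 hI2)]

lemma cd_cont {f : ℝ → ℝ} {N : ℕ} (h : ContDiff ℝ (N:ℕ∞) f) {m : ℕ} (hm : m ≤ N) :
    Continuous (iteratedDeriv m f) :=
  h.continuous_iteratedDeriv m (by exact_mod_cast hm)

lemma cd_diff {f : ℝ → ℝ} {N : ℕ} (h : ContDiff ℝ (N:ℕ∞) f) {m : ℕ} (hm : m < N) :
    Differentiable ℝ (iteratedDeriv m f) :=
  h.differentiable_iteratedDeriv m (by exact_mod_cast hm)

lemma LK : ∀ m : ℕ, ∀ ε : ℝ, 0 < ε → ∃ C : ℝ, 0 < C ∧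
    ∀ f : ℝ → ℝ, ContDiff ℝ ((m+1 : ℕ):ℕ∞) f → ∀ a b : ℝ, a < b →
      ∫ t in a..b, (iteratedDeriv m f t)^2 ≤
        ε * (b-a)^2 * (∫ t in a..b, (iteratedDeriv (m+1) f t)^2)
          + C * ((b-a)^(2*m))⁻¹ * ∫ t in a..b, (f t)^2 := by
  intro m
  induction m with
  | zero =>
    intro ε hε
    refine ⟨1, one_pos, ?_⟩
    intro f hf a b hab
    have h1 : 0 ≤ ∫ t in a..b, (iteratedDeriv (0+1) f t)^2 := intnn hab.le
    simp only [iteratedDeriv_zero, Nat.mul_zero, pow_zero, inv_one, one_mul]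
    linarith [mul_nonneg (mul_nonneg hε.le (sq_nonneg (b-a))) h1]
  | succ m ih =>
    intro ε hε
    obtain ⟨C1, hC1, hstep⟩ := step_eps (show (0:ℝ) < ε/2 by linarith)
    obtain ⟨C2, hC2, hih⟩ := ih (1/(2*C1)) (by positivity)
    refine ⟨2*C1*C2, by positivity, ?_⟩
    intro f hf a b hab
    obtain ⟨L, hL⟩ : ∃ L : ℝ, L = b - a := ⟨_, rfl⟩
    have hL0 : 0 < L := by rw [hL]; linarith
    rw [← hL]
    -- the function g = iteratedDeriv m f
    have hd1 : Differentiable ℝ (iteratedDeriv m f) := cd_diff hf (by omega)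
    have hd2 : Differentiable ℝ (iteratedDeriv (m+1) f) := cd_diff hf (by omega)
    have hc2 : Continuous (iteratedDeriv (m+1+1) f) := cd_cont hf (by omega)
    have e1 : deriv (iteratedDeriv m f) = iteratedDeriv (m+1) f := (iteratedDeriv_succ).symm
    have e2 : deriv (deriv (iteratedDeriv m f)) = iteratedDeriv (m+1+1) f := by
      rw [e1]; exact (iteratedDeriv_succ).symm
    have hstep' := hstep (iteratedDeriv m f) hd1 (by rw [e1]; exact hd2)
      (by rw [e2]; exact hc2) a b hab
    rw [e2] at hstep'
    rw [e1] at hstep'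
    rw [← hL] at hstep'
    have hih' := hih f (hf.of_le (by exact_mod_cast Nat.le_succ (m+1))) a b hab
    rw [← hL] at hih'
    -- combine
    have hA2 : 0 ≤ ∫ t in a..b, (iteratedDeriv (m+1+1) f t)^2 := intnn hab.le
    have hA1 : 0 ≤ ∫ t in a..b, (iteratedDeriv (m+1) f t)^2 := intnn hab.le
    have hA0 : 0 ≤ ∫ t in a..b, (f t)^2 := intnn hab.le
    -- hstep' : A1 ≤ C1 * (L^2)⁻¹ * Am + (ε/2) * L^2 * A2
    -- hih' : Am ≤ (1/(2C1)) * L^2 * A1 + C2 * (L^(2m))⁻¹ * A0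
    have key : C1 * (L^2)⁻¹ * ((1/(2*C1)) * L^2 * (∫ t in a..b, (iteratedDeriv (m+1) f t)^2)) = (∫ t in a..b, (iteratedDeriv (m+1) f t)^2) / 2 := by
      field_simp
    have hmono := mul_le_mul_of_nonneg_left hih' (show (0:ℝ) ≤ C1 * (L^2)⁻¹ by positivity)
    have pow_e : (L^2)⁻¹ * (L^(2*m))⁻¹ = (L^(2*(m+1)))⁻¹ := by
      rw [← mul_inv]
      congr 1
      rw [← pow_add]
      congr 1
      ring
    have expand : C1 * (L^2)⁻¹ * ((1/(2*C1)) * L^2 * (∫ t in a..b, (iteratedDeriv (m+1) f t)^2) + C2 * (L^(2*m))⁻¹ * (∫ t in a..b, (f t)^2))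
        = (∫ t in a..b, (iteratedDeriv (m+1) f t)^2)/2 + C1 * C2 * ((L^2)⁻¹ * (L^(2*m))⁻¹) * (∫ t in a..b, (f t)^2) := by
      rw [mul_add, key]; ring
    rw [expand, pow_e] at hmono
    have hprod : 0 ≤ ε/2 * L^2 * (∫ t in a..b, (iteratedDeriv (m+1+1) f t)^2) :=
      mul_nonneg (by positivity) hA2
    linarith [hmono, hstep', hprod]

lemma chain (j : ℕ) : ∀ r : ℕ, ∃ C : ℝ, 0 < C ∧
    ∀ f : ℝ → ℝ, ContDiff ℝ ((j+r : ℕ):ℕ∞) f → ∀ a b : ℝ, a < b →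
      ∫ t in a..b, (iteratedDeriv j f t)^2 ≤
        (b-a)^(2*r) * (∫ t in a..b, (iteratedDeriv (j+r) f t)^2)
          + C * ((b-a)^(2*j))⁻¹ * ∫ t in a..b, (f t)^2 := by
  intro r
  induction r with
  | zero =>
    refine ⟨1, one_pos, ?_⟩
    intro f hf a b hab
    have h0 : 0 ≤ ∫ t in a..b, (f t)^2 := intnn hab.le
    have h1 : (0:ℝ) < ((b-a)^(2*j))⁻¹ := by
      have : (0:ℝ) < b - a := by linarith
      positivity
    simp only [Nat.add_zero, Nat.mul_zero, pow_zero, one_mul]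
    nlinarith
  | succ r ih =>
    obtain ⟨C, hC, hch⟩ := ih
    obtain ⟨C', hC', hlk⟩ := LK (j+r) 1 one_pos
    refine ⟨C + C', by positivity, ?_⟩
    intro f hf a b hab
    obtain ⟨L, hL⟩ : ∃ L : ℝ, L = b - a := ⟨_, rfl⟩
    have hL0 : 0 < L := by rw [hL]; linarith
    rw [← hL]
    have e : j + (r+1) = (j+r)+1 := by omega
    rw [e]
    have hf' : ContDiff ℝ ((j+r+1:ℕ):ℕ∞) f := by
      have : ((j + (r+1):ℕ):ℕ∞) = ((j+r+1:ℕ):ℕ∞) := by norm_cast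
      rw [← this]; exact hf
    have h1 := hch f (hf'.of_le (by exact_mod_cast Nat.le_succ (j+r))) a b hab
    have h2 := hlk f hf' a b hab
    rw [← hL] at h1 h2
    have hA0 : 0 ≤ ∫ t in a..b, (f t)^2 := intnn hab.le
    -- multiply h2 by L^(2r) and combine
    have hmul := mul_le_mul_of_nonneg_left h2 (show (0:ℝ) ≤ L^(2*r) by positivity)
    have pe1 : L^(2*r) * (1 * L^2 * (∫ t in a..b, (iteratedDeriv (j+r+1) f t)^2))
        = L^(2*(r+1)) * (∫ t in a..b, (iteratedDeriv (j+r+1) f t)^2) := by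
      rw [show 2*(r+1) = 2*r + 2 by ring, pow_add]; ring
    have pe2 : L^(2*r) * (C' * (L^(2*(j+r)))⁻¹ * (∫ t in a..b, (f t)^2))
        = C' * (L^(2*j))⁻¹ * (∫ t in a..b, (f t)^2) := by
      rw [show 2*(j+r) = 2*j + 2*r by ring, pow_add, mul_inv]
      have : L^(2*r) ≠ 0 := by positivity
      field_simp
    rw [mul_add, pe1, pe2] at hmul
    calc ∫ t in a..b, (iteratedDeriv j f t)^2
        ≤ L^(2*r) * (∫ t in a..b, (iteratedDeriv (j+r) f t)^2)
          + C * (L^(2*j))⁻¹ * ∫ t in a..b, (f t)^2 := h1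
      _ ≤ (L^(2*(r+1)) * (∫ t in a..b, (iteratedDeriv (j+r+1) f t)^2)
            + C' * (L^(2*j))⁻¹ * (∫ t in a..b, (f t)^2))
          + C * (L^(2*j))⁻¹ * ∫ t in a..b, (f t)^2 := by linarith
      _ = L^(2*(r+1)) * (∫ t in a..b, (iteratedDeriv (j+r+1) f t)^2)
          + (C + C') * (L^(2*j))⁻¹ * ∫ t in a..b, (f t)^2 := by ring

lemma crossing {u : ℝ → ℝ} (hu : Continuous u) {a b s t : ℝ}
    (hs : s ∈ Set.Icc a b) (ht : t ∈ Set.Icc a b) (hst : s < t)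
    (hus : u s ≤ -(1/2)) (hut : 1/2 ≤ u t) :
    ∃ S T : ℝ, a ≤ S ∧ S < T ∧ T ≤ b ∧ u S = -(1/2) ∧ u T = 1/2 ∧
      ∀ x ∈ Set.Ioo S T, |u x| ≤ 1/2 := by
  -- T = first time u hits 1/2 in [s,t]
  set E : Set ℝ := Set.Icc s t ∩ u ⁻¹' {1/2} with hE
  have hEne : E.Nonempty := by
    have h12 : (1/2 : ℝ) ∈ Set.Icc (u s) (u t) := ⟨by linarith, hut⟩
    obtain ⟨y, hy, hy2⟩ := intermediate_value_Icc hst.le hu.continuousOn h12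
    exact ⟨y, hy, by simpa using hy2⟩
  have hEclosed : IsClosed E := (isClosed_Icc).inter (isClosed_singleton.preimage hu)
  have hEbdd : BddBelow E := ⟨s, fun x hx => hx.1.1⟩
  set T := sInf E with hT
  have hTE : T ∈ E := hEclosed.csInf_mem hEne hEbdd
  have hTval : u T = 1/2 := hTE.2
  have hTst : T ∈ Set.Icc s t := hTE.1
  have claim1 : ∀ x ∈ Set.Ico s T, u x < 1/2 := by
    intro x hx
    by_contra h
    push_neg at h
    have h12 : (1/2 : ℝ) ∈ Set.Icc (u s) (u x) := ⟨by linarith, h⟩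
    obtain ⟨y, hy, hy2⟩ := intermediate_value_Icc hx.1 hu.continuousOn h12
    have hyE : y ∈ E := ⟨⟨hy.1, by have := hx.2; have := hTst.2; linarith [hy.2]⟩, by simpa using hy2⟩
    have := csInf_le hEbdd hyE
    have := hy.2; have := hx.2
    linarith
  -- S = last time u hits -1/2 in [s,T]
  have hsT : s ≤ T := hTst.1
  set F : Set ℝ := Set.Icc s T ∩ u ⁻¹' {-(1/2)} with hF
  have hFne : F.Nonempty := by
    have h12 : (-(1/2) : ℝ) ∈ Set.Icc (u s) (u T) := ⟨hus, by linarith⟩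
    obtain ⟨y, hy, hy2⟩ := intermediate_value_Icc hsT hu.continuousOn h12
    exact ⟨y, hy, by simpa using hy2⟩
  have hFclosed : IsClosed F := (isClosed_Icc).inter (isClosed_singleton.preimage hu)
  have hFbdd : BddAbove F := ⟨T, fun x hx => hx.1.2⟩
  set S := sSup F with hS
  have hSF : S ∈ F := hFclosed.csSup_mem hFne hFbdd
  have hSval : u S = -(1/2) := hSF.2
  have hSsT : S ∈ Set.Icc s T := hSF.1
  have hST : S < T := by
    rcases lt_or_eq_of_le hSsT.2 with h | h
    · exact h
    · exfalso; rw [h] at hSval; rw [hSval] at hTval; norm_num at hTval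
  have claim2 : ∀ x ∈ Set.Ioc S T, -(1/2) < u x := by
    intro x hx
    by_contra h
    push_neg at h
    have hxT : x < T := by
      rcases lt_or_eq_of_le hx.2 with h' | h'
      · exact h'
      · exfalso; rw [h'] at h; rw [hTval] at h; norm_num at h
    have h12 : (-(1/2) : ℝ) ∈ Set.Icc (u x) (u T) := ⟨h, by linarith⟩
    obtain ⟨y, hy, hy2⟩ := intermediate_value_Icc hxT.le hu.continuousOn h12
    have hyF : y ∈ F := ⟨⟨by linarith [hy.1, hSsT.1, hx.1], hy.2⟩, by simpa using hy2⟩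
    have := le_csSup hFbdd hyF
    linarith [hy.1, hx.1]
  refine ⟨S, T, by linarith [hSsT.1, hs.1], hST, by linarith [hTst.2, ht.2], hSval, hTval, ?_⟩
  intro x hx
  have h1 : u x < 1/2 := claim1 x ⟨by linarith [hSsT.1, hx.1], hx.2⟩
  have h2 : -(1/2) < u x := claim2 x ⟨hx.1, hx.2.le⟩
  rw [abs_le]
  constructor <;> linarith

-- pointwise claims about the double-well lower bound
lemma pw9pos {s : ℝ} (h : -(1/2) < s) : (s - 1)^2 ≤ 9 * min ((s+1)^2) ((s-1)^2) := by
  rcases min_cases ((s+1)^2) ((s-1)^2) with ⟨hm, hle⟩ | ⟨hm, hle⟩ <;> rw [hm] <;>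
    nlinarith [mul_nonneg (show (0:ℝ) ≤ s + 1/2 by linarith) (show (0:ℝ) ≤ s + 2 by linarith), sq_nonneg (s-1)]

lemma pw9neg {s : ℝ} (h : s < 1/2) : (s + 1)^2 ≤ 9 * min ((s+1)^2) ((s-1)^2) := by
  rcases min_cases ((s+1)^2) ((s-1)^2) with ⟨hm, hle⟩ | ⟨hm, hle⟩ <;> rw [hm] <;>
    nlinarith [mul_nonneg (show (0:ℝ) ≤ 1/2 - s by linarith) (show (0:ℝ) ≤ 2 - s by linarith), sq_nonneg (s+1)]

lemma pwquarter {s : ℝ} (h : |s| ≤ 1/2) : (1/4 : ℝ) ≤ min ((s+1)^2) ((s-1)^2) := by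
  rw [abs_le] at h
  rcases min_cases ((s+1)^2) ((s-1)^2) with ⟨hm, _⟩ | ⟨hm, _⟩ <;> rw [hm] <;> nlinarith [h.1, h.2]

lemma pwsq {s : ℝ} : s^2 ≤ 2 * min ((s+1)^2) ((s-1)^2) + 2 := by
  rcases min_cases ((s+1)^2) ((s-1)^2) with ⟨hm, _⟩ | ⟨hm, _⟩ <;> rw [hm] <;>
    nlinarith [sq_nonneg (s+2), sq_nonneg (s-2)]

-- scalar combination for case 2
lemma scalar2 {C1 C2 d e x q : ℝ} (hC1 : 0 < C1) (hC2 : 0 < C2) (hd : 0 ≤ d) (he : 0 ≤ e)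
    (hx : x ≤ e + 2*C1*d + 2*C1) (hcross : 1 ≤ 4*d*(e + 2*C2*d + 2*C2))
    (hq0 : 0 ≤ q) (hq : q * (1 + 2*C1 + 2*C1*(4*(1+4*C2))) ≤ 1) : q * x ≤ d + e := by
  have hS : 1 ≤ 4*(1+4*C2)*(d+e) := by
    rcases le_or_gt 1 (d+e) with h | h
    · nlinarith
    · nlinarith [mul_nonneg hd he, mul_nonneg hd hd, mul_nonneg (mul_nonneg hC2.le hd) hd,
        mul_nonneg (mul_nonneg hC2.le hd) he]
  have hxS : x ≤ (1 + 2*C1 + 2*C1*(4*(1+4*C2))) * (d+e) := by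
    have h1 : 2*C1 ≤ 2*C1*(4*(1+4*C2))*(d+e) := by nlinarith
    nlinarith
  calc q * x ≤ q * ((1 + 2*C1 + 2*C1*(4*(1+4*C2))) * (d+e)) := by
        apply mul_le_mul_of_nonneg_left hxS hq0
    _ ≤ d + e := by nlinarith

/-- One-dimensional nonlinear interpolation inequality for the
`(k-1)`-st derivative (Lemma 3.1 analogue): there is a constant `q* > 0`,
independent of the interval, such that for every bounded open interval `(a,b)`,
every `q < q*` and every `u` of class `C^k`,
`q ∫ |u^(k-1)|² ≤ (b-a)^{-2(k-1)} ∫ W(u) + (b-a)² ∫ |u^(k)|²`. -/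
theorem statement0 (k : ℕ) (hk : 1 < k) (W : ℝ → ℝ)
    (hWcont : Continuous W) (hWnonneg : ∀ s, 0 ≤ W s)
    (hH2 : ∀ s : ℝ, min ((s + 1) ^ 2) ((s - 1) ^ 2) ≤ W s) :
    ∃ qstar : ℝ, 0 < qstar ∧
      ∀ a b : ℝ, a < b → ∀ q : ℝ, q < qstar →
        ∀ u : ℝ → ℝ, ContDiff ℝ (k : ℕ∞) u →
          q * ∫ t in Set.Ioo a b, (iteratedDeriv (k - 1) u t) ^ 2 ≤
            ((b - a) ^ (2 * (k - 1)))⁻¹ * (∫ t in Set.Ioo a b, W (u t)) +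
              (b - a) ^ 2 * ∫ t in Set.Ioo a b, (iteratedDeriv k u t) ^ 2 := by
  obtain ⟨n, rfl⟩ : ∃ n, k = n + 2 := ⟨k - 2, by omega⟩
  obtain ⟨C1, hC1, hLK⟩ := LK (n+1) 1 one_pos
  obtain ⟨C2, hC2, hch⟩ := chain 1 (n+1)
  obtain ⟨M, hMdef⟩ : ∃ M : ℝ, M = 1 + 2*C1 + 2*C1*(4*(1+4*C2)) := ⟨_, rfl⟩
  have hM : 0 < M := by rw [hMdef]; positivity
  obtain ⟨qs, hqsdef⟩ : ∃ qs : ℝ, qs = min (1/(9*C1+1)) (1/M) := ⟨_, rfl⟩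
  have hqs0 : 0 < qs := by rw [hqsdef]; positivity
  refine ⟨qs, hqs0, ?_⟩
  intro a b hab q hq u hu
  have hL0 : (0:ℝ) < b - a := by linarith
  have hLne : (b - a) ≠ 0 := ne_of_gt hL0
  have hucont : Continuous u := hu.continuous
  have ioo : ∀ g : ℝ → ℝ, (∫ t in Set.Ioo a b, g t) = ∫ t in a..b, g t := by
    intro g
    rw [intervalIntegral.integral_of_le hab.le, MeasureTheory.integral_Ioc_eq_integral_Ioo]
  rw [ioo, ioo, ioo]
  have e1 : n + 2 - 1 = n + 1 := by omega
  rw [e1]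
  have e2 : 2*(n+1) = 2*n+2 := by ring
  rw [e2]
  -- notation
  have hWint : IntervalIntegrable (fun t => W (u t)) volume a b :=
    (hWcont.comp hucont).intervalIntegrable _ _
  have hAN : 0 ≤ ∫ t in a..b, (iteratedDeriv (n+1) u t)^2 := intnn hab.le
  have hAK : 0 ≤ ∫ t in a..b, (iteratedDeriv (n+2) u t)^2 := intnn hab.le
  have hDW : 0 ≤ ∫ t in a..b, W (u t) :=
    intervalIntegral.integral_nonneg hab.le (fun x _ => hWnonneg _)
  -- reduce q to qs
  have hred : q * (∫ t in a..b, (iteratedDeriv (n+1) u t)^2)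
      ≤ qs * ∫ t in a..b, (iteratedDeriv (n+1) u t)^2 :=
    mul_le_mul_of_nonneg_right hq.le hAN
  refine le_trans hred ?_
  -- LK applied to u
  have hLKu := hLK u hu a b hab
  rw [e2] at hLKu
  rw [one_mul] at hLKu
  by_cases hcase : (∀ x ∈ Set.Icc a b, -(1/2) < u x) ∨ (∀ x ∈ Set.Icc a b, u x < 1/2)
  · -- Case A : u stays on one side
    obtain ⟨σ, hσpt⟩ : ∃ σ : ℝ, ∀ x ∈ Set.Icc a b, (u x - σ)^2 ≤ 9 * W (u x) := by
      rcases hcase with h | h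
      · refine ⟨1, fun x hx => le_trans (pw9pos (h x hx)) ?_⟩
        have := hH2 (u x); linarith
      · refine ⟨-1, fun x hx => ?_⟩
        rw [sub_neg_eq_add]
        refine le_trans (pw9neg (h x hx)) ?_
        have := hH2 (u x); linarith
    have hfc : ContDiff ℝ ((n+2:ℕ):ℕ∞) (fun x => u x - σ) := hu.sub contDiff_const
    have hde : deriv (fun x => u x - σ) = deriv u := funext fun x => deriv_sub_const σ
    have eN : iteratedDeriv (n+1) (fun x => u x - σ) = iteratedDeriv (n+1) u := by
      rw [iteratedDeriv_succ', hde, ← iteratedDeriv_succ']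
    have eK : iteratedDeriv (n+2) (fun x => u x - σ) = iteratedDeriv (n+2) u := by
      rw [show n+2 = (n+1)+1 by omega, iteratedDeriv_succ' (n := n+1), hde,
        ← iteratedDeriv_succ']
    have hLKf := hLK (fun x => u x - σ) hfc a b hab
    rw [eN, eK, e2, one_mul] at hLKf
    have hA0f : (∫ t in a..b, (u t - σ)^2) ≤ 9 * ∫ t in a..b, W (u t) := by
      have h := intervalIntegral.integral_mono_on hab.le
        (((hucont.sub continuous_const).pow 2).intervalIntegrable _ _)
        (hWint.const_mul 9) hσpt
      rw [intervalIntegral.integral_const_mul] at h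
      exact h
    have hqs1 : qs * (9*C1+1) ≤ 1 := by
      have h1 : qs ≤ 1/(9*C1+1) := hqsdef ▸ min_le_left _ _
      have h2 : (0:ℝ) < 9*C1+1 := by positivity
      rw [le_div_iff₀ h2] at h1
      linarith
    have hP2 : (0:ℝ) ≤ ((b-a)^(2*n+2))⁻¹ * ∫ t in a..b, W (u t) := by
      have : (0:ℝ) < ((b-a)^(2*n+2))⁻¹ := by positivity
      positivity
    have hP1 : (0:ℝ) ≤ (b-a)^2 * ∫ t in a..b, (iteratedDeriv (n+2) u t)^2 := by
      have h2 : (0:ℝ) ≤ (b-a)^2 := sq_nonneg _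
      exact mul_nonneg h2 hAK
    have hkey : (∫ t in a..b, (iteratedDeriv (n+1) u t)^2)
        ≤ (b-a)^2 * (∫ t in a..b, (iteratedDeriv (n+2) u t)^2)
          + 9*C1*(((b-a)^(2*n+2))⁻¹ * ∫ t in a..b, W (u t)) := by
      have hmul := mul_le_mul_of_nonneg_left hA0f
        (show (0:ℝ) ≤ C1 * ((b-a)^(2*n+2))⁻¹ by positivity)
      calc (∫ t in a..b, (iteratedDeriv (n+1) u t)^2)
          ≤ (b-a)^2 * (∫ t in a..b, (iteratedDeriv (n+2) u t)^2)
            + C1 * ((b-a)^(2*n+2))⁻¹ * (∫ t in a..b, (u t - σ)^2) := hLKf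
        _ ≤ (b-a)^2 * (∫ t in a..b, (iteratedDeriv (n+2) u t)^2)
            + C1 * ((b-a)^(2*n+2))⁻¹ * (9 * ∫ t in a..b, W (u t)) := by linarith
        _ = (b-a)^2 * (∫ t in a..b, (iteratedDeriv (n+2) u t)^2)
            + 9*C1*(((b-a)^(2*n+2))⁻¹ * ∫ t in a..b, W (u t)) := by ring
    have hqsle1 : qs ≤ 1 := by nlinarith
    nlinarith [mul_le_mul_of_nonneg_left hkey hqs0.le, hP1, hP2, hqs1, hqs0.le,
      mul_nonneg hqs0.le hP1, mul_nonneg hqs0.le hP2]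
  · -- Case B : transition (crossing)
    push_neg at hcase
    obtain ⟨⟨s, hs, hus⟩, ⟨t, ht, hut⟩⟩ := hcase
    obtain ⟨S, T, haS, hST, hTb, hSb, hTb2, hjump, hband⟩ :
        ∃ S T : ℝ, a ≤ S ∧ S < T ∧ T ≤ b ∧ |u S| ≤ 1/2 ∧ |u T| ≤ 1/2 ∧
          (u T - u S)^2 = 1 ∧ ∀ x ∈ Set.Ioo S T, |u x| ≤ 1/2 := by
      rcases lt_trichotomy s t with h | h | h
      · obtain ⟨S, T, h1, h2, h3, h4, h5, h6⟩ := crossing hucont hs ht h hus hut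
        refine ⟨S, T, h1, h2, h3, ?_, ?_, ?_, h6⟩
        · rw [h4, abs_le]; constructor <;> norm_num
        · rw [h5, abs_le]; constructor <;> norm_num
        · rw [h4, h5]; norm_num
      · exfalso; rw [h] at hus; linarith
      · obtain ⟨S, T, h1, h2, h3, h4, h5, h6⟩ := crossing (u := fun x => -u x)
          hucont.neg ht hs h (by linarith) (by linarith)
        have h5' : u T = -(1/2) := by
          have : -u T = 1/2 := h5
          linarith
        have h4'' : u S = 1/2 := by
          have : -u S = -(1/2) := h4
          linarith
        refine ⟨S, T, h1, h2, h3, ?_, ?_, ?_, ?_⟩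
        · rw [h4'', abs_le]; constructor <;> norm_num
        · rw [h5', abs_le]; constructor <;> norm_num
        · rw [h4'', h5']; norm_num
        · intro x hx
          have := h6 x hx
          rwa [abs_neg] at this
    have hbandIcc : ∀ x ∈ Set.Icc S T, |u x| ≤ 1/2 := by
      intro x hx
      rcases eq_or_lt_of_le hx.1 with h | h
      · rw [← h]; exact hSb
      rcases eq_or_lt_of_le hx.2 with h' | h'
      · rw [h']; exact hTb2
      exact hband x ⟨h, h'⟩
    have hWq : ∀ x ∈ Set.Icc S T, (1/4:ℝ) ≤ W (u x) := fun x hx =>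
      le_trans (pwquarter (hbandIcc x hx)) (hH2 (u x))
    have hTS4 : T - S ≤ 4 * ∫ t' in a..b, W (u t') := by
      have h14 : (∫ x in S..T, (1/4:ℝ)) ≤ ∫ x in S..T, W (u x) :=
        intervalIntegral.integral_mono_on (μ := volume) hST.le
          intervalIntegrable_const ((hWcont.comp hucont).intervalIntegrable _ _) hWq
      rw [intervalIntegral.integral_const, smul_eq_mul] at h14
      have h2 : (∫ t' in S..T, W (u t')) ≤ ∫ t' in a..b, W (u t') :=
        intervalIntegral.integral_mono_interval haS hST.le hTb
          (Filter.Eventually.of_forall (fun z => hWnonneg _)) hWint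
      linarith
    have hdu : Differentiable ℝ u :=
      hu.differentiable (by simp)
    have hdc : Continuous (deriv u) := by
      have h1 : Continuous (iteratedDeriv 1 u) := cd_cont hu (by omega)
      rwa [iteratedDeriv_one] at h1
    have hftc : (∫ x in S..T, deriv u x) = u T - u S :=
      intervalIntegral.integral_deriv_eq_sub (fun x _ => hdu x) (hdc.intervalIntegrable _ _)
    have hcs := cs_abs hdc hST.le
    have habs : |∫ x in S..T, deriv u x| ≤ ∫ x in S..T, |deriv u x| :=
      intervalIntegral.abs_integral_le_integral_abs hST.le
    have hsq : (u T - u S)^2 ≤ (T - S) * ∫ x in S..T, (deriv u x)^2 := by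
      have h1 : (u T - u S)^2 = (∫ x in S..T, deriv u x)^2 := by rw [hftc]
      have h2 : (∫ x in S..T, deriv u x)^2 ≤ (∫ x in S..T, |deriv u x|)^2 := by
        have h3 := pow_le_pow_left₀ (abs_nonneg _) habs 2
        rwa [sq_abs] at h3
      linarith
    rw [hjump] at hsq
    have hIST : 0 ≤ ∫ x in S..T, (deriv u x)^2 := intnn hST.le
    have hsub : (∫ x in S..T, (deriv u x)^2) ≤ ∫ x in a..b, (deriv u x)^2 :=
      sq_int_mono hdc haS hST.le hTb
    have hA1nn : 0 ≤ ∫ x in a..b, (deriv u x)^2 := intnn hab.le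
    have hcross1 : 1 ≤ 4 * (∫ t' in a..b, W (u t')) * ∫ x in a..b, (deriv u x)^2 := by
      nlinarith [hsq, hTS4, hDW, hIST, hsub, hA1nn,
        mul_nonneg (show (0:ℝ) ≤ 4*(∫ t' in a..b, W (u t')) - (T - S) by linarith) hIST,
        mul_nonneg (show (0:ℝ) ≤ 4*(∫ t' in a..b, W (u t')) by linarith)
          (show (0:ℝ) ≤ (∫ x in a..b, (deriv u x)^2) - ∫ x in S..T, (deriv u x)^2 by linarith)]
    have hA0 : (∫ x in a..b, (u x)^2) ≤ 2*(∫ t' in a..b, W (u t')) + 2*(b-a) := by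
      have hpt : ∀ x ∈ Set.Icc a b, (u x)^2 ≤ 2 * W (u x) + 2 := by
        intro x _
        have h1 := pwsq (s := u x)
        have h2 := hH2 (u x)
        linarith
      have h := intervalIntegral.integral_mono_on (μ := volume) hab.le
        ((hucont.pow 2).intervalIntegrable _ _)
        ((hWint.const_mul 2).add intervalIntegrable_const) hpt
      rw [intervalIntegral.integral_add (hWint.const_mul 2) intervalIntegrable_const,
        intervalIntegral.integral_const_mul, intervalIntegral.integral_const, smul_eq_mul] at h
      simp only [Pi.pow_apply] at h; linarith
    have hcast : ContDiff ℝ ((1+(n+1):ℕ):ℕ∞) u := by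
      rw [show 1+(n+1) = n+2 by omega]; exact hu
    have hchu := hch u hcast a b hab
    rw [show 1+(n+1) = n+2 by omega, iteratedDeriv_one, e2,
      show 2*1 = 2 by norm_num] at hchu
    obtain ⟨d, hd_def⟩ : ∃ d:ℝ, d = (∫ t' in a..b, W (u t'))/(b-a) := ⟨_, rfl⟩
    obtain ⟨ee, he_def⟩ : ∃ e:ℝ,
        e = (b-a)^(2*n+3) * ∫ x in a..b, (iteratedDeriv (n+2) u x)^2 := ⟨_, rfl⟩
    have hd0 : 0 ≤ d := hd_def ▸ div_nonneg hDW hL0.le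
    have he0 : 0 ≤ ee := he_def ▸ mul_nonneg (by positivity) hAK
    have hE3 : 4 * (∫ t' in a..b, W (u t')) *
        ((b-a)^(2*n+2) * (∫ x in a..b, (iteratedDeriv (n+2) u x)^2)
          + C2 * ((b-a)^2)⁻¹ * (2*(∫ t' in a..b, W (u t')) + 2*(b-a)))
        = 4*d*(ee + 2*C2*d + 2*C2) := by
      rw [hd_def, he_def]; field_simp; ring
    have hI1 : 1 ≤ 4*d*(ee + 2*C2*d + 2*C2) := by
      rw [← hE3]
      have hb1 : (∫ x in a..b, (deriv u x)^2)
          ≤ (b-a)^(2*n+2) * (∫ x in a..b, (iteratedDeriv (n+2) u x)^2)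
            + C2*((b-a)^2)⁻¹*(2*(∫ t' in a..b, W (u t')) + 2*(b-a)) := by
        have hmul := mul_le_mul_of_nonneg_left hA0
          (show (0:ℝ) ≤ C2*((b-a)^2)⁻¹ by positivity)
        linarith [hchu]
      have hmul2 := mul_le_mul_of_nonneg_left hb1
        (show (0:ℝ) ≤ 4*(∫ t' in a..b, W (u t')) by linarith)
      calc (1:ℝ) ≤ 4 * (∫ t' in a..b, W (u t')) * ∫ x in a..b, (deriv u x)^2 := hcross1
        _ ≤ _ := by linarith [hmul2]
    have hE1 : ((b-a)^2 * (∫ x in a..b, (iteratedDeriv (n+2) u x)^2)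
          + C1 * ((b-a)^(2*n+2))⁻¹ * (2*(∫ t' in a..b, W (u t')) + 2*(b-a))) * (b-a)^(2*n+1)
        = ee + 2*C1*d + 2*C1 := by
      rw [hd_def, he_def]; field_simp; ring
    have hI2 : (∫ x in a..b, (iteratedDeriv (n+1) u x)^2) * (b-a)^(2*n+1)
        ≤ ee + 2*C1*d + 2*C1 := by
      rw [← hE1]
      apply mul_le_mul_of_nonneg_right _ (by positivity)
      have hmul := mul_le_mul_of_nonneg_left hA0
        (show (0:ℝ) ≤ C1*((b-a)^(2*n+2))⁻¹ by positivity)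
      linarith [hLKu]
    have hqsM : qs * (1 + 2*C1 + 2*C1*(4*(1+4*C2))) ≤ 1 := by
      have h1 : qs ≤ 1/M := hqsdef ▸ min_le_right _ _
      rw [le_div_iff₀ hM] at h1
      calc qs * (1 + 2*C1 + 2*C1*(4*(1+4*C2))) = qs * M := by rw [hMdef]
        _ ≤ 1 := h1
    have hfin := scalar2 hC1 hC2 hd0 he0 hI2 hI1 hqs0.le hqsM
    have hE4 : ((b-a)^(2*n+2))⁻¹ * (∫ t' in a..b, W (u t'))
          + (b-a)^2 * (∫ x in a..b, (iteratedDeriv (n+2) u x)^2)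
        = (d + ee)/(b-a)^(2*n+1) := by
      rw [hd_def, he_def]; field_simp; ring
    rw [hE4, le_div_iff₀ (by positivity : (0:ℝ) < (b-a)^(2*n+1))]
    calc qs * (∫ x in a..b, (iteratedDeriv (n+1) u x)^2) * (b-a)^(2*n+1)
        = qs * ((∫ x in a..b, (iteratedDeriv (n+1) u x)^2) * (b-a)^(2*n+1)) := by ring
      _ ≤ d + ee := hfin
end

section
/- Let k > 1 be an integer and let W : ℝ → ℝ be continuous, nonnegative and satisfy (H2). Then for every ℓ ∈ {1,…,k-1} there exists a constant q'_ℓ > 0, independent of the interval, such that for every bounded open interval (a,b) with a < b, every real number q < q'_ℓ, and every function u : ℝ → ℝ of class C^k, one has q · ∫_a^b |u^{(ℓ)}(t)|² dt ≤ (b-a)^{-2ℓ} · ∫_a^b W(u(t)) dt + (b-a)^{2(k-ℓ)} · ∫_a^b |u^{(k)}(t)|² dt. -/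
set_option maxHeartbeats 1600000

open MeasureTheory

namespace Statement1Aux

open Set

lemma intOnIoo {f : ℝ → ℝ} (hf : Continuous f) (a b : ℝ) :
    IntegrableOn f (Ioo a b) :=
  (hf.integrableOn_Icc).mono_set Ioo_subset_Icc_self

/-- Cauchy–Schwarz on an interval. -/
lemma cs {f : ℝ → ℝ} (hf : Continuous f) {α β : ℝ} (hab : α ≤ β) :
    (∫ t in Ioo α β, |f t|) ^ 2 ≤ (β - α) * ∫ t in Ioo α β, f t ^ 2 := by
  set m := β - α with hmdef
  have hm0 : 0 ≤ m := by simp [hmdef]; linarith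
  have hvol : (volume (Ioo α β)).toReal = m := by
    rw [Real.volume_Ioo, ENNReal.toReal_ofReal hm0]
  have hif : IntegrableOn (fun t => |f t|) (Ioo α β) := intOnIoo hf.abs α β
  have hif2 : IntegrableOn (fun t => f t ^ 2) (Ioo α β) := intOnIoo (hf.pow 2) α β
  set X := ∫ t in Ioo α β, |f t| with hX
  set S := ∫ t in Ioo α β, f t ^ 2 with hS
  have hX0 : 0 ≤ X := setIntegral_nonneg measurableSet_Ioo fun t _ => abs_nonneg _
  have hS0 : 0 ≤ S := setIntegral_nonneg measurableSet_Ioo fun t _ => sq_nonneg _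
  have key : ∀ c : ℝ, 0 < c → 2 * c * X ≤ c ^ 2 * S + m := by
    intro c hc
    have h1 : ∫ t in Ioo α β, (2 * c) * |f t| ≤ ∫ t in Ioo α β, (c ^ 2 * f t ^ 2 + 1) := by
      refine setIntegral_mono_on (hif.const_mul _) ((hif2.const_mul _).add (integrableOn_const ?_))
        measurableSet_Ioo ?_
      · rw [Real.volume_Ioo]; exact ENNReal.ofReal_ne_top
      · intro t _
        nlinarith [sq_nonneg (c * |f t| - 1), sq_abs (f t)]
    rw [integral_const_mul] at h1
    rw [integral_add (hif2.const_mul _) (integrableOn_const (by rw [Real.volume_Ioo]; exact ENNReal.ofReal_ne_top))] at h1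
    rw [integral_const_mul, setIntegral_const, measureReal_def, hvol, smul_eq_mul, mul_one] at h1
    calc 2 * c * X = 2 * c * X := rfl
      _ ≤ c ^ 2 * S + m := by nlinarith [h1]
  rcases eq_or_lt_of_le hS0 with hSz | hSpos
  · have hXz : X ≤ 0 := by
      by_contra hx
      push_neg at hx
      have := key ((m + 1) / (2 * X)) (by positivity)
      rw [← hSz] at this
      have h2 : 2 * ((m + 1) / (2 * X)) * X = m + 1 := by field_simp
      nlinarith
    have : X = 0 := le_antisymm hXz hX0
    rw [this, ← hSz]; nlinarith
  · rcases eq_or_lt_of_le hX0 with hXz | hXpos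
    · rw [← hXz]; nlinarith [mul_nonneg hm0 hS0]
    · have := key (X / S) (by positivity)
      have h2 : 2 * (X / S) * X = 2 * X ^ 2 / S := by ring
      have h3 : (X / S) ^ 2 * S = X ^ 2 / S := by field_simp
      rw [h2, h3] at this
      rw [div_add' _ _ _ (ne_of_gt hSpos), div_le_div_iff₀ hSpos hSpos] at this
      nlinarith

/-- A point where a nonnegative continuous function is at most twice its average. -/
lemma exists_le_avg {g : ℝ → ℝ} (hg : Continuous g) (hg0 : ∀ t, 0 ≤ g t) {α β : ℝ} (h : α < β) :
    ∃ ξ ∈ Ioo α β, g ξ ≤ 2 / (β - α) * ∫ t in Ioo α β, g t := by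
  set d := β - α with hd
  have hd0 : 0 < d := by simp [hd]; linarith
  have hne : (Icc (α + d/4) (β - d/4)).Nonempty := nonempty_Icc.2 (by simp [hd]; linarith)
  obtain ⟨ξ, hξJ, hmin⟩ := isCompact_Icc.exists_isMinOn hne hg.continuousOn
  have hsub : Icc (α + d/4) (β - d/4) ⊆ Ioo α β := by
    intro x hx
    exact ⟨by have := hx.1; simp only [hd] at *; linarith,
           by have := hx.2; simp only [hd] at *; linarith⟩
  refine ⟨ξ, hsub hξJ, ?_⟩
  have h1 : (d/2) * g ξ ≤ ∫ t in Icc (α + d/4) (β - d/4), g t := by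
    have hmono := setIntegral_mono_on (f := fun _ => g ξ) (g := g)
      (integrableOn_const (by rw [Real.volume_Icc]; exact ENNReal.ofReal_ne_top))
      ((intOnIoo hg α β).mono_set hsub) measurableSet_Icc (fun x hx => hmin hx)
    rw [setIntegral_const, measureReal_def, Real.volume_Icc, smul_eq_mul] at hmono
    have : β - d/4 - (α + d/4) = d/2 := by simp [hd]; ring
    rw [this, ENNReal.toReal_ofReal (by positivity)] at hmono
    exact hmono
  have h2 : ∫ t in Icc (α + d/4) (β - d/4), g t ≤ ∫ t in Ioo α β, g t :=
    setIntegral_mono_set (intOnIoo hg α β)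
      (Filter.Eventually.of_forall fun t => hg0 t) (hsub.eventuallyLE)
  have hgξ : 0 ≤ g ξ := hg0 ξ
  have := le_trans h1 h2
  rw [← sub_nonneg]
  have h3 : 2 / d * (∫ t in Ioo α β, g t) - g ξ = (2/d) * ((∫ t in Ioo α β, g t) - (d/2) * g ξ) := by
    field_simp
  rw [h3]
  exact mul_nonneg (by positivity) (by linarith)

/-- The constants in the pointwise small-derivative lemma. -/
noncomputable def Ccon : ℕ → ℝ
  | 0 => 2
  | (j+1) => 2 * 3 ^ (j+2) * Ccon j

lemma Ccon_succ (j : ℕ) : Ccon (j+1) = 2 * 3 ^ (j+2) * Ccon j := rfl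

lemma Ccon_pos (j : ℕ) : 0 < Ccon j := by
  induction j with
  | zero => norm_num [Ccon]
  | succ j ih => rw [Ccon_succ]; positivity

lemma Ccon_mono : Monotone Ccon := by
  apply monotone_nat_of_le_succ
  intro j
  rw [Ccon_succ]
  nlinarith [Ccon_pos j, pow_pos (by norm_num : (0:ℝ) < 3) (j+2), one_le_pow₀ (by norm_num : (1:ℝ) ≤ 3) (n := j+2)]


/-- In any subinterval of `(0,1)` there is a point where the `j`-th derivative is controlled
by the `L²` norm of `w` on `(0,1)`. -/
lemma exists_point {k : ℕ} {w : ℝ → ℝ} (hw : ContDiff ℝ (k:ℕ∞) w) :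
    ∀ j, j < k → ∀ α β : ℝ, 0 ≤ α → β ≤ 1 → α < β →
      ∃ ξ ∈ Ioo α β, |iteratedDeriv j w ξ| ≤
        Ccon j / (β - α) ^ (j+1) * Real.sqrt (∫ t in Ioo (0:ℝ) 1, w t ^ 2) := by
  have hA0 : 0 ≤ ∫ t in Ioo (0:ℝ) 1, w t ^ 2 :=
    setIntegral_nonneg measurableSet_Ioo fun t _ => sq_nonneg _
  set N := Real.sqrt (∫ t in Ioo (0:ℝ) 1, w t ^ 2) with hN
  have hNnn : 0 ≤ N := Real.sqrt_nonneg _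
  intro j
  induction j with
  | zero =>
    intro _ α β hα hβ hαβ
    set d := β - α with hd
    have hd0 : 0 < d := by simp only [hd]; linarith
    have hd1 : d ≤ 1 := by simp only [hd]; linarith
    obtain ⟨ξ, hξ, hle⟩ := exists_le_avg (g := fun t => w t ^ 2)
      ((hw.continuous).pow 2) (fun t => sq_nonneg _) hαβ
    refine ⟨ξ, hξ, ?_⟩
    have hsub : Ioo α β ⊆ Ioo (0:ℝ) 1 := fun x hx => ⟨lt_of_le_of_lt hα hx.1, lt_of_lt_of_le hx.2 hβ⟩
    have hmono : ∫ t in Ioo α β, w t ^ 2 ≤ ∫ t in Ioo (0:ℝ) 1, w t ^ 2 :=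
      setIntegral_mono_set (intOnIoo ((hw.continuous).pow 2) 0 1)
        (Filter.Eventually.of_forall fun t => sq_nonneg _) hsub.eventuallyLE
    have h1 : w ξ ^ 2 ≤ 2/d * ∫ t in Ioo (0:ℝ) 1, w t ^ 2 :=
      le_trans hle (mul_le_mul_of_nonneg_left hmono (by positivity))
    have h2 : |iteratedDeriv 0 w ξ| ≤ Real.sqrt (2/d) * N := by
      rw [iteratedDeriv_zero, ← Real.sqrt_sq_eq_abs, hN, ← Real.sqrt_mul (by positivity)]
      exact Real.sqrt_le_sqrt h1
    have h3 : Real.sqrt (2/d) ≤ 2/d := by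
      have h4 : (2/d : ℝ) = Real.sqrt ((2/d)^2) := (Real.sqrt_sq (by positivity)).symm
      nth_rewrite 2 [h4]
      apply Real.sqrt_le_sqrt
      have h5 : (1:ℝ) ≤ 2/d := by rw [le_div_iff₀ hd0]; linarith
      nlinarith
    calc |iteratedDeriv 0 w ξ| ≤ (2/d) * N :=
          le_trans h2 (mul_le_mul_of_nonneg_right h3 hNnn)
      _ = Ccon 0 / d ^ (0+1) * N := by norm_num [Ccon]
  | succ j ih =>
    intro hjk α β hα hβ hαβ
    have hjk' : j < k := Nat.lt_of_succ_lt hjk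
    set d := β - α with hd
    have hd0 : 0 < d := by simp only [hd]; linarith
    obtain ⟨ξ₁, hξ₁, h1⟩ := ih hjk' α (α + d/3) hα (by simp only [hd]; linarith) (by linarith)
    obtain ⟨ξ₂, hξ₂, h2⟩ := ih hjk' (β - d/3) β (by simp only [hd] at *; linarith) hβ
      (by simp only [hd]; linarith)
    have hαd : α + d/3 - α = d/3 := by ring
    have hβd : β - (β - d/3) = d/3 := by ring
    rw [hαd] at h1
    rw [hβd] at h2
    have hξ12 : ξ₁ < ξ₂ := by
      have := hξ₁.2; have := hξ₂.1; simp only [hd] at *; linarith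
    have hgap : d/3 ≤ ξ₂ - ξ₁ := by
      have := hξ₁.2; have := hξ₂.1; simp only [hd] at *; linarith
    have hdiff : Differentiable ℝ (iteratedDeriv j w) :=
      hw.differentiable_iteratedDeriv j (by exact_mod_cast hjk')
    obtain ⟨η, hη, hslope⟩ := exists_hasDerivAt_eq_slope (iteratedDeriv j w)
      (iteratedDeriv (j+1) w) hξ12 (hdiff.continuous.continuousOn)
      (fun x _ => by rw [iteratedDeriv_succ]; exact (hdiff x).hasDerivAt)
    refine ⟨η, ⟨lt_trans hξ₁.1 hη.1, lt_trans hη.2 hξ₂.2⟩, ?_⟩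
    rw [hslope, abs_div]
    have hden : |ξ₂ - ξ₁| = ξ₂ - ξ₁ := abs_of_pos (by linarith)
    rw [hden]
    have hnum : |iteratedDeriv j w ξ₂ - iteratedDeriv j w ξ₁| ≤ 2 * (Ccon j / (d/3) ^ (j+1)) * N := by
      calc |iteratedDeriv j w ξ₂ - iteratedDeriv j w ξ₁|
          ≤ |iteratedDeriv j w ξ₂| + |iteratedDeriv j w ξ₁| := abs_sub _ _
        _ ≤ 2 * (Ccon j / (d/3) ^ (j+1)) * N := by nlinarith [h1, h2]
    calc |iteratedDeriv j w ξ₂ - iteratedDeriv j w ξ₁| / (ξ₂ - ξ₁)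
        ≤ (2 * (Ccon j / (d/3) ^ (j+1)) * N) / (d/3) := by
          exact div_le_div₀ (mul_nonneg (mul_nonneg (by norm_num) (div_nonneg (le_of_lt (Ccon_pos j)) (by positivity))) hNnn) hnum (by positivity) hgap
      _ = Ccon (j+1) / d ^ (j+1+1) * N := by
          rw [show Ccon (j+1) = 2 * 3 ^ (j+2) * Ccon j from rfl]
          rw [div_pow, pow_succ]
          field_simp
          ring

lemma constIntOn (a b : ℝ) (c : ℝ) : IntegrableOn (fun _ : ℝ => c) (Ioo a b) :=
  integrableOn_const (by rw [Real.volume_Ioo]; exact ENNReal.ofReal_ne_top)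

/-- `L¹` norm bounded by `L²` norm on `(0,1)`. -/
lemma l1_le_l2 {f : ℝ → ℝ} (hf : Continuous f) :
    ∫ t in Ioo (0:ℝ) 1, |f t| ≤ Real.sqrt (∫ t in Ioo (0:ℝ) 1, f t ^ 2) := by
  have h := cs hf (by norm_num : (0:ℝ) ≤ 1)
  have hX0 : 0 ≤ ∫ t in Ioo (0:ℝ) 1, |f t| :=
    setIntegral_nonneg measurableSet_Ioo fun t _ => abs_nonneg _
  have := Real.sqrt_le_sqrt (by linarith : (∫ t in Ioo (0:ℝ) 1, |f t|) ^ 2 ≤ ∫ t in Ioo (0:ℝ) 1, f t ^ 2)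
  rwa [Real.sqrt_sq hX0] at this

/-- FTC bound: value at `t` controlled by value at `ξ` plus `L¹` norm of next derivative. -/
lemma ftc_bound {k : ℕ} {w : ℝ → ℝ} (hw : ContDiff ℝ (k:ℕ∞) w) {j : ℕ} (hj : j < k)
    {ξ : ℝ} (hξ : ξ ∈ Ioo (0:ℝ) 1) {t : ℝ} (ht : t ∈ Icc (0:ℝ) 1) :
    |iteratedDeriv j w t| ≤ |iteratedDeriv j w ξ| + ∫ x in Ioo (0:ℝ) 1, |iteratedDeriv (j+1) w x| := by
  have hdiff : Differentiable ℝ (iteratedDeriv j w) :=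
    hw.differentiable_iteratedDeriv j (by exact_mod_cast hj)
  have hcont : Continuous (iteratedDeriv (j+1) w) :=
    hw.continuous_iteratedDeriv (j+1) (by exact_mod_cast hj)
  have hftc : ∫ x in ξ..t, iteratedDeriv (j+1) w x = iteratedDeriv j w t - iteratedDeriv j w ξ := by
    have hs : iteratedDeriv (j+1) w = deriv (iteratedDeriv j w) := iteratedDeriv_succ
    rw [hs]
    exact intervalIntegral.integral_deriv_eq_sub (fun x _ => hdiff x)
      ((hs ▸ hcont).intervalIntegrable _ _)
  have hIoosub : ∀ p q : ℝ, p ∈ Icc (0:ℝ) 1 → q ∈ Icc (0:ℝ) 1 → Ioo p q ⊆ Ioo (0:ℝ) 1 := by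
    intro p q hp hq x hx
    exact ⟨lt_of_le_of_lt hp.1 hx.1, lt_of_lt_of_le hx.2 hq.2⟩
  have hmono : ∀ p q : ℝ, p ∈ Icc (0:ℝ) 1 → q ∈ Icc (0:ℝ) 1 →
      ∫ x in Ioo p q, |iteratedDeriv (j+1) w x| ≤ ∫ x in Ioo (0:ℝ) 1, |iteratedDeriv (j+1) w x| := by
    intro p q hp hq
    exact setIntegral_mono_set (intOnIoo hcont.abs 0 1)
      (Filter.Eventually.of_forall fun x => abs_nonneg _) ((hIoosub p q hp hq).eventuallyLE)
  have hξI : ξ ∈ Icc (0:ℝ) 1 := Ioo_subset_Icc_self hξ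
  have habs : |∫ x in ξ..t, iteratedDeriv (j+1) w x| ≤
      ∫ x in Ioo (0:ℝ) 1, |iteratedDeriv (j+1) w x| := by
    rcases le_total ξ t with h | h
    · calc |∫ x in ξ..t, iteratedDeriv (j+1) w x| ≤ ∫ x in ξ..t, |iteratedDeriv (j+1) w x| :=
            intervalIntegral.abs_integral_le_integral_abs h
        _ = ∫ x in Ioo ξ t, |iteratedDeriv (j+1) w x| := by
            rw [intervalIntegral.integral_of_le h, integral_Ioc_eq_integral_Ioo]
        _ ≤ _ := hmono ξ t hξI ht
    · rw [intervalIntegral.integral_symm, abs_neg]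
      calc |∫ x in t..ξ, iteratedDeriv (j+1) w x| ≤ ∫ x in t..ξ, |iteratedDeriv (j+1) w x| :=
            intervalIntegral.abs_integral_le_integral_abs h
        _ = ∫ x in Ioo t ξ, |iteratedDeriv (j+1) w x| := by
            rw [intervalIntegral.integral_of_le h, integral_Ioc_eq_integral_Ioo]
        _ ≤ _ := hmono t ξ ht hξI
  have : iteratedDeriv j w t = iteratedDeriv j w ξ + ∫ x in ξ..t, iteratedDeriv (j+1) w x := by
    rw [hftc]; ring
  rw [this]
  exact le_trans (abs_add_le _ _) (by linarith)

/-- Downward induction: sup bound on intermediate derivatives. -/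
lemma sup_bound {k : ℕ} (hk : 1 ≤ k) {w : ℝ → ℝ} (hw : ContDiff ℝ (k:ℕ∞) w) :
    ∀ i, i ≤ k - 1 → ∀ t ∈ Icc (0:ℝ) 1, |iteratedDeriv (k-1-i) w t| ≤
      (∑ r ∈ Finset.range (i+1), Ccon (k-1-r)) * Real.sqrt (∫ x in Ioo (0:ℝ) 1, w x ^ 2)
        + Real.sqrt (∫ x in Ioo (0:ℝ) 1, (iteratedDeriv k w x) ^ 2) := by
  set N := Real.sqrt (∫ x in Ioo (0:ℝ) 1, w x ^ 2) with hN
  set NK := Real.sqrt (∫ x in Ioo (0:ℝ) 1, (iteratedDeriv k w x) ^ 2) with hNK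
  have hNnn : 0 ≤ N := Real.sqrt_nonneg _
  intro i
  induction i with
  | zero =>
    intro _ t ht
    have hj : k - 1 - 0 < k := by omega
    obtain ⟨ξ, hξ, hb⟩ := exists_point hw (k-1-0) hj 0 1 le_rfl le_rfl one_pos
    have hb' : |iteratedDeriv (k-1-0) w ξ| ≤ Ccon (k-1-0) * N := by
      simpa using hb
    have hstep := ftc_bound hw hj hξ ht
    have hkk : k - 1 - 0 + 1 = k := by omega
    rw [hkk] at hstep
    have hl1 : ∫ x in Ioo (0:ℝ) 1, |iteratedDeriv k w x| ≤ NK :=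
      l1_le_l2 (hw.continuous_iteratedDeriv k (by exact_mod_cast le_rfl))
    rw [Finset.sum_range_one]
    calc |iteratedDeriv (k-1-0) w t| ≤ |iteratedDeriv (k-1-0) w ξ| + ∫ x in Ioo (0:ℝ) 1, |iteratedDeriv k w x| := hstep
      _ ≤ Ccon (k-1-0) * N + NK := add_le_add hb' hl1
  | succ i ih =>
    intro hik t ht
    have hik' : i ≤ k - 1 := by omega
    have hj : k - 1 - (i+1) < k := by omega
    obtain ⟨ξ, hξ, hb⟩ := exists_point hw (k-1-(i+1)) hj 0 1 le_rfl le_rfl one_pos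
    have hb' : |iteratedDeriv (k-1-(i+1)) w ξ| ≤ Ccon (k-1-(i+1)) * N := by
      simpa using hb
    have hstep := ftc_bound hw hj hξ ht
    have hsucc : k - 1 - (i+1) + 1 = k - 1 - i := by omega
    rw [hsucc] at hstep
    have hcont : Continuous (iteratedDeriv (k-1-i) w) :=
      hw.continuous_iteratedDeriv _ (Nat.cast_le.mpr (by omega))
    have hint : ∫ x in Ioo (0:ℝ) 1, |iteratedDeriv (k-1-i) w x| ≤
        (∑ r ∈ Finset.range (i+1), Ccon (k-1-r)) * N + NK := by
      have hb2 : ∀ x ∈ Ioo (0:ℝ) 1, |iteratedDeriv (k-1-i) w x| ≤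
          (∑ r ∈ Finset.range (i+1), Ccon (k-1-r)) * N + NK :=
        fun x hx => ih hik' x (Ioo_subset_Icc_self hx)
      have := setIntegral_mono_on (intOnIoo hcont.abs 0 1)
        (integrableOn_const (by rw [Real.volume_Ioo]; exact ENNReal.ofReal_ne_top))
        measurableSet_Ioo hb2
      rwa [setIntegral_const, measureReal_def, Real.volume_Ioo, smul_eq_mul,
        show ENNReal.toReal (ENNReal.ofReal (1-0:ℝ)) = 1 by norm_num, one_mul] at this
    calc |iteratedDeriv (k-1-(i+1)) w t|
        ≤ |iteratedDeriv (k-1-(i+1)) w ξ| + ∫ x in Ioo (0:ℝ) 1, |iteratedDeriv (k-1-i) w x| := hstep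
      _ ≤ Ccon (k-1-(i+1)) * N + ((∑ r ∈ Finset.range (i+1), Ccon (k-1-r)) * N + NK) :=
          add_le_add hb' hint
      _ = (∑ r ∈ Finset.range (i+1+1), Ccon (k-1-r)) * N + NK := by
          conv_rhs => rw [Finset.sum_range_succ]
          ring

noncomputable def CG (k : ℕ) : ℝ := 2 * ((k:ℝ) * Ccon (k-1)) ^ 2 + 2

lemma CG_pos (k : ℕ) : 0 < CG k := by unfold CG; positivity

/-- Interpolation inequality on the unit interval. -/
lemma gn {k ℓ : ℕ} (hk : 1 ≤ k) (hl : ℓ ≤ k - 1) {w : ℝ → ℝ} (hw : ContDiff ℝ (k:ℕ∞) w) :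
    ∫ t in Ioo (0:ℝ) 1, (iteratedDeriv ℓ w t) ^ 2 ≤
      CG k * ((∫ t in Ioo (0:ℝ) 1, w t ^ 2) + ∫ t in Ioo (0:ℝ) 1, (iteratedDeriv k w t) ^ 2) := by
  set A := ∫ t in Ioo (0:ℝ) 1, w t ^ 2 with hA
  set B := ∫ t in Ioo (0:ℝ) 1, (iteratedDeriv k w t) ^ 2 with hB
  have hA0 : 0 ≤ A := setIntegral_nonneg measurableSet_Ioo fun t _ => sq_nonneg _
  have hB0 : 0 ≤ B := setIntegral_nonneg measurableSet_Ioo fun t _ => sq_nonneg _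
  set N := Real.sqrt A with hN
  set NK := Real.sqrt B with hNK
  set G : ℝ := (k:ℝ) * Ccon (k-1) with hG
  have hG0 : 0 < G := by
    have hc := Ccon_pos (k-1)
    have hkp : (0:ℝ) < (k:ℝ) := by exact_mod_cast hk
    exact mul_pos hkp hc
  have hpt : ∀ t ∈ Icc (0:ℝ) 1, |iteratedDeriv ℓ w t| ≤ G * N + NK := by
    intro t ht
    have h1 := sup_bound hk hw (k-1-ℓ) (by omega) t ht
    rw [show k-1-(k-1-ℓ) = ℓ by omega] at h1
    refine h1.trans ?_
    have hsum : (∑ r ∈ Finset.range (k-1-ℓ+1), Ccon (k-1-r)) ≤ G := by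
      calc (∑ r ∈ Finset.range (k-1-ℓ+1), Ccon (k-1-r))
          ≤ ∑ _r ∈ Finset.range (k-1-ℓ+1), Ccon (k-1) :=
            Finset.sum_le_sum fun r _ => Ccon_mono (by omega)
        _ = (k-1-ℓ+1 : ℕ) * Ccon (k-1) := by rw [Finset.sum_const]; simp [mul_comm]
        _ ≤ G := by
            rw [hG]
            refine mul_le_mul_of_nonneg_right ?_ (le_of_lt (Ccon_pos (k-1)))
            exact_mod_cast (by omega : k-1-ℓ+1 ≤ k)
    have hNnn : 0 ≤ N := Real.sqrt_nonneg _
    nlinarith [hsum]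
  have hcontl : Continuous (iteratedDeriv ℓ w) :=
    hw.continuous_iteratedDeriv ℓ (by exact_mod_cast (by omega : ℓ ≤ k))
  have hNnn : 0 ≤ N := Real.sqrt_nonneg _
  have hNKnn : 0 ≤ NK := Real.sqrt_nonneg _
  have hL : ∫ t in Ioo (0:ℝ) 1, (iteratedDeriv ℓ w t) ^ 2 ≤ (G * N + NK) ^ 2 := by
    have h1 : ∀ t ∈ Ioo (0:ℝ) 1, (iteratedDeriv ℓ w t) ^ 2 ≤ (G * N + NK) ^ 2 := by
      intro t ht
      have := hpt t (Ioo_subset_Icc_self ht)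
      have h2 := abs_nonneg (iteratedDeriv ℓ w t)
      nlinarith [sq_abs (iteratedDeriv ℓ w t)]
    have := setIntegral_mono_on (intOnIoo (hcontl.pow 2) 0 1)
      (integrableOn_const (by rw [Real.volume_Ioo]; exact ENNReal.ofReal_ne_top))
      measurableSet_Ioo h1
    rwa [setIntegral_const, measureReal_def, Real.volume_Ioo, smul_eq_mul,
      show ENNReal.toReal (ENNReal.ofReal (1-0:ℝ)) = 1 by norm_num, one_mul] at this
  have hNA : N ^ 2 = A := Real.sq_sqrt hA0
  have hNB : NK ^ 2 = B := Real.sq_sqrt hB0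
  calc ∫ t in Ioo (0:ℝ) 1, (iteratedDeriv ℓ w t) ^ 2 ≤ (G * N + NK) ^ 2 := hL
    _ ≤ CG k * (A + B) := by
        unfold CG
        rw [← hG]
        nlinarith [sq_nonneg (G * N - NK), sq_nonneg (N - NK), sq_nonneg N, sq_nonneg NK]

/-- Crossing lemma: a continuous function going from `≥ 1/2` to `≤ -1/2` has a transition
subinterval on which `|v| ≤ 1/2` and with total variation `1`. -/
lemma crossing {v : ℝ → ℝ} (hv : Continuous v) {a' b' : ℝ} (hab : a' < b')
    (hva : 1/2 ≤ v a') (hvb : v b' ≤ -(1/2)) :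
    ∃ s t', s < t' ∧ a' ≤ s ∧ t' ≤ b' ∧ (∀ x ∈ Icc s t', |v x| ≤ 1/2) ∧ |v t' - v s| = 1 := by
  set T : Set ℝ := Icc a' b' ∩ v ⁻¹' {1/2} with hT
  have hTclosed : IsClosed T := isClosed_Icc.inter (isClosed_singleton.preimage hv)
  have hTne : T.Nonempty := by
    have h1 : (1/2 : ℝ) ∈ Icc (v b') (v a') := ⟨by linarith, hva⟩
    obtain ⟨x, hx, hvx⟩ := intermediate_value_Icc' hab.le hv.continuousOn h1
    exact ⟨x, hx, by simp [hvx]⟩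
  have hTbdd : BddAbove T := (bddAbove_Icc).mono inter_subset_left
  set s := sSup T with hs
  have hsT : s ∈ T := hTclosed.csSup_mem hTne hTbdd
  have hvs : v s = 1/2 := hsT.2
  have hsI : s ∈ Icc a' b' := hsT.1
  have hsb : s < b' := lt_of_le_of_ne hsI.2 (by intro h; rw [h] at hvs; linarith)
  set U : Set ℝ := Icc s b' ∩ v ⁻¹' {-(1/2)} with hU
  have hUclosed : IsClosed U := isClosed_Icc.inter (isClosed_singleton.preimage hv)
  have hUne : U.Nonempty := by
    have h1 : (-(1/2) : ℝ) ∈ Icc (v b') (v s) := ⟨hvb, by linarith⟩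
    obtain ⟨x, hx, hvx⟩ := intermediate_value_Icc' hsb.le hv.continuousOn h1
    exact ⟨x, hx, by simp [hvx]⟩
  have hUbdd : BddBelow U := (bddBelow_Icc).mono inter_subset_left
  set t' := sInf U with ht'
  have htU : t' ∈ U := hUclosed.csInf_mem hUne hUbdd
  have hvt : v t' = -(1/2) := htU.2
  have htI : t' ∈ Icc s b' := htU.1
  have hst : s < t' := lt_of_le_of_ne htI.1 (by intro h; rw [← h] at hvt; rw [hvt] at hvs; linarith)
  refine ⟨s, t', hst, hsI.1, htI.2, ?_, by rw [hvt, hvs]; norm_num⟩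
  intro x hx
  rw [abs_le]
  constructor
  · -- lower bound
    by_contra hlow
    push_neg at hlow
    have hxt : x < t' := by
      rcases lt_or_eq_of_le hx.2 with h | h
      · exact h
      · rw [h, hvt] at hlow; linarith
    have h1 : (-(1/2) : ℝ) ∈ Icc (v x) (v s) := ⟨by linarith, by rw [hvs]; linarith⟩
    obtain ⟨y, hy, hvy⟩ := intermediate_value_Icc' hx.1 hv.continuousOn h1
    have hyU : y ∈ U := ⟨⟨hy.1, le_trans hy.2 (le_trans hx.2 htI.2)⟩, by simp [hvy]⟩
    have := csInf_le hUbdd hyU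
    rw [← ht'] at this
    have := le_trans this hy.2
    linarith [lt_of_le_of_lt (le_trans (csInf_le hUbdd hyU) hy.2) hxt]
  · -- upper bound
    by_contra hup
    push_neg at hup
    have hxs : s < x := by
      rcases lt_or_eq_of_le hx.1 with h | h
      · exact h
      · rw [← h, hvs] at hup; linarith
    have h1 : (1/2 : ℝ) ∈ Icc (v b') (v x) := ⟨by linarith, by linarith⟩
    obtain ⟨y, hy, hvy⟩ := intermediate_value_Icc' (le_trans hx.2 htI.2) hv.continuousOn h1
    have hyT : y ∈ T := ⟨⟨le_trans hsI.1 (le_trans hxs.le hy.1), hy.2⟩, by simp [hvy]⟩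
    have := le_csSup hTbdd hyT
    rw [← hs] at this
    linarith [lt_of_lt_of_le hxs hy.1]

lemma sq_le_min (x : ℝ) : x ^ 2 ≤ 2 * min ((x+1)^2) ((x-1)^2) + 2 := by
  rcases le_total 0 x with h | h
  · rw [min_eq_right (by nlinarith)]; nlinarith [sq_nonneg (x-2)]
  · rw [min_eq_left (by nlinarith)]; nlinarith [sq_nonneg (x+2)]

lemma min_sq_nonneg (x : ℝ) : 0 ≤ min ((x+1)^2) ((x-1)^2) := le_min (sq_nonneg _) (sq_nonneg _)

lemma shifted_le {x : ℝ} (h : -(1/2) < x) : (x - 1) ^ 2 ≤ 9 * min ((x+1)^2) ((x-1)^2) := by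
  rcases min_cases ((x+1)^2) ((x-1)^2) with ⟨heq, hle⟩ | ⟨heq, hle⟩ <;> rw [heq]
  · nlinarith [mul_nonneg (by linarith : (0:ℝ) ≤ x + 2) (by linarith : (0:ℝ) ≤ x + 1/2)]
  · nlinarith [sq_nonneg (x-1)]

lemma min_quarter {x : ℝ} (h : |x| ≤ 1/2) : 1/4 ≤ min ((x+1)^2) ((x-1)^2) := by
  rw [abs_le] at h
  exact le_min (by nlinarith [h.1]) (by nlinarith [h.2])

lemma iteratedDeriv_sub_one {n : ℕ} (hn : 1 ≤ n) (f : ℝ → ℝ) :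
    iteratedDeriv n (fun t => f t - 1) = iteratedDeriv n f := by
  obtain ⟨m, rfl⟩ := Nat.exists_eq_add_of_le hn
  rw [show 1 + m = m + 1 by ring, iteratedDeriv_succ', iteratedDeriv_succ']
  have h : (deriv fun t => f t - 1) = deriv f := funext fun x => deriv_sub_const 1
  rw [h]

lemma iteratedDeriv_neg' (n : ℕ) (f : ℝ → ℝ) :
    iteratedDeriv n (fun t => -(f t)) = fun t => -(iteratedDeriv n f t) := by
  induction n generalizing f with
  | zero => simp [iteratedDeriv_zero]
  | succ n ih =>
    rw [iteratedDeriv_succ', iteratedDeriv_succ']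
    rw [show (deriv fun t => -(f t)) = fun t => -(deriv f t) from funext fun x => deriv.neg]
    exact ih _

lemma min_sq_neg (x : ℝ) : min ((-x+1)^2) ((-x-1)^2) = min ((x+1)^2) ((x-1)^2) := by
  rw [min_comm]
  congr 1 <;> ring


noncomputable def c0 (k : ℕ) : ℝ := min (1/(13 * CG k)) (1/100)

lemma c0_pos (k : ℕ) : 0 < c0 k := by
  have := CG_pos k
  apply lt_min (by positivity) (by norm_num)

noncomputable def qunit (k : ℕ) : ℝ := min (1/(CG k * (2 + 2/(c0 k)))) (1/(9 * CG k))

lemma qunit_pos (k : ℕ) : 0 < qunit k := by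
  have h1 := CG_pos k
  have h2 := c0_pos k
  apply lt_min (by positivity) (by positivity)

lemma v2_bound {v : ℝ → ℝ} (hvc : Continuous v) :
    ∫ t in Ioo (0:ℝ) 1, v t ^ 2 ≤
      2 * (∫ t in Ioo (0:ℝ) 1, min ((v t + 1)^2) ((v t - 1)^2)) + 2 := by
  have hming : Continuous (fun t => min ((v t + 1)^2) ((v t - 1)^2)) :=
    Continuous.min (by fun_prop) (by fun_prop)
  have h1 : ∀ t ∈ Ioo (0:ℝ) 1, v t ^ 2 ≤ 2 * min ((v t + 1)^2) ((v t - 1)^2) + 2 :=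
    fun t _ => sq_le_min (v t)
  have h2 := setIntegral_mono_on (intOnIoo (hvc.pow 2) 0 1)
    (intOnIoo ((continuous_const.mul hming).add continuous_const) 0 1) measurableSet_Ioo h1
  simp only [Pi.add_apply, Pi.mul_apply, Pi.pow_apply] at h2
  rwa [integral_add ((intOnIoo hming 0 1).const_mul 2) (constIntOn 0 1 2),
    integral_const_mul, setIntegral_const, measureReal_def, Real.volume_Ioo, smul_eq_mul,
    show ENNReal.toReal (ENNReal.ofReal (1-0:ℝ)) = 1 by norm_num, one_mul] at h2

/-- The small-energy case, assuming `v` is near `+1` at some point. -/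
lemma key_case {k ℓ : ℕ} (hk : 1 < k) (hl1 : 1 ≤ ℓ) (hl : ℓ ≤ k-1) {v : ℝ → ℝ}
    (hv : ContDiff ℝ (k:ℕ∞) v)
    (hsmall : (∫ t in Ioo (0:ℝ) 1, min ((v t + 1)^2) ((v t - 1)^2)) +
      (∫ t in Ioo (0:ℝ) 1, (iteratedDeriv k v t)^2) < c0 k)
    {t₀ : ℝ} (ht₀ : t₀ ∈ Ioo (0:ℝ) 1) (hv₀ : 1/2 < v t₀) :
    ∫ t in Ioo (0:ℝ) 1, (iteratedDeriv ℓ v t)^2 ≤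
      9 * CG k * ((∫ t in Ioo (0:ℝ) 1, min ((v t + 1)^2) ((v t - 1)^2)) +
        ∫ t in Ioo (0:ℝ) 1, (iteratedDeriv k v t)^2) := by
  set A := ∫ t in Ioo (0:ℝ) 1, min ((v t + 1)^2) ((v t - 1)^2) with hA
  set B := ∫ t in Ioo (0:ℝ) 1, (iteratedDeriv k v t)^2 with hB
  have hA0 : 0 ≤ A := setIntegral_nonneg measurableSet_Ioo fun t _ => min_sq_nonneg _
  have hB0 : 0 ≤ B := setIntegral_nonneg measurableSet_Ioo fun t _ => sq_nonneg _
  have hCG := CG_pos k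
  have hvc : Continuous v := hv.continuous
  have hming : Continuous (fun t => min ((v t + 1)^2) ((v t - 1)^2)) :=
    Continuous.min (by fun_prop) (by fun_prop)
  have hc0a : c0 k ≤ 1/(13 * CG k) := min_le_left _ _
  have hc0b : c0 k ≤ 1/100 := min_le_right _ _
  -- ∫ v² ≤ 2A + 2
  have h2A : ∫ t in Ioo (0:ℝ) 1, v t ^ 2 ≤ 2*A + 2 := by
    have h2 := v2_bound hvc
    rwa [← hA] at h2
  -- bound on ∫ (v')²
  have hgn1 : ∫ t in Ioo (0:ℝ) 1, (iteratedDeriv 1 v t)^2 ≤ CG k * (2*A + 2 + B) := by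
    have := gn (by omega) (by omega : 1 ≤ k - 1) hv
    rw [← hB] at this
    refine this.trans ?_
    have : (∫ t in Ioo (0:ℝ) 1, v t ^ 2) + B ≤ 2*A + 2 + B := by linarith
    nlinarith [this, hCG]
  -- no dip below -1/2
  have hnd : ∀ t ∈ Ioo (0:ℝ) 1, -(1/2) < v t := by
    by_contra hcon
    push_neg at hcon
    obtain ⟨t₁, ht₁, hvt₁⟩ := hcon
    have hne : t₀ ≠ t₁ := by intro h; rw [h] at hv₀; linarith
    have hkey : ∃ s t', s < t' ∧ Icc s t' ⊆ Ioo (0:ℝ) 1 ∧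
        (∀ x ∈ Icc s t', |v x| ≤ 1/2) ∧ |v t' - v s| = 1 := by
      rcases lt_or_gt_of_ne hne with hlt | hgt
      · obtain ⟨s, t', h1, h2, h3, h4, h5⟩ := crossing hvc hlt hv₀.le hvt₁
        exact ⟨s, t', h1, fun x hx => ⟨lt_of_lt_of_le ht₀.1 (le_trans h2 hx.1),
          lt_of_le_of_lt (le_trans hx.2 h3) ht₁.2⟩, h4, h5⟩
      · obtain ⟨s, t', h1, h2, h3, h4, h5⟩ := crossing (hvc.neg)
          hgt (by simpa using (by linarith : (1:ℝ)/2 ≤ -(v t₁)))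
          (by simpa using (by linarith : -(v t₀) ≤ -(1/2 : ℝ)))
        refine ⟨s, t', h1, fun x hx => ⟨lt_of_lt_of_le ht₁.1 (le_trans h2 hx.1),
          lt_of_le_of_lt (le_trans hx.2 h3) ht₀.2⟩, ?_, ?_⟩
        · intro x hx
          have h6 : |-(v x)| ≤ 1/2 := h4 x hx
          rwa [abs_neg] at h6
        · have h5b : |(-(v t')) - (-(v s))| = 1 := h5
          rw [(by ring : (-(v t')) - (-(v s)) = -(v t' - v s)), abs_neg] at h5b
          exact h5b
    obtain ⟨s, t', hst, hsub, hbnd, hvar⟩ := hkey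
    have hsubIoo : Ioo s t' ⊆ Ioo (0:ℝ) 1 := fun x hx => hsub (Ioo_subset_Icc_self hx)
    -- measure bound : t' - s ≤ 4A
    have hm : (t' - s) * (1/4) ≤ A := by
      have h1 : ∀ x ∈ Ioo s t', (1/4 : ℝ) ≤ min ((v x + 1)^2) ((v x - 1)^2) :=
        fun x hx => min_quarter (hbnd x (Ioo_subset_Icc_self hx))
      have h2 := setIntegral_mono_on (constIntOn s t' (1/4))
        ((intOnIoo hming 0 1).mono_set hsubIoo) measurableSet_Ioo h1
      rw [setIntegral_const, measureReal_def, Real.volume_Ioo, smul_eq_mul,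
        ENNReal.toReal_ofReal (by linarith)] at h2
      refine h2.trans ?_
      exact setIntegral_mono_set (intOnIoo hming 0 1)
        (Filter.Eventually.of_forall fun t => min_sq_nonneg _) hsubIoo.eventuallyLE
    -- FTC and Cauchy-Schwarz
    have hd1 : Differentiable ℝ v := hv.differentiable (by exact_mod_cast (show k ≠ 0 by omega))
    have hdc : Continuous (deriv v) := by
      have := hv.continuous_iteratedDeriv 1 (Nat.cast_le.mpr (by omega))
      rwa [iteratedDeriv_one] at this
    have hftc : ∫ x in s..t', deriv v x = v t' - v s :=
      intervalIntegral.integral_deriv_eq_sub (fun x _ => hd1 x) (hdc.intervalIntegrable _ _)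
    have h1le : (1:ℝ) ≤ ∫ x in Ioo s t', |deriv v x| := by
      have h1 : |∫ x in s..t', deriv v x| ≤ ∫ x in Ioo s t', |deriv v x| := by
        calc |∫ x in s..t', deriv v x| ≤ ∫ x in s..t', |deriv v x| :=
              intervalIntegral.abs_integral_le_integral_abs hst.le
          _ = ∫ x in Ioo s t', |deriv v x| := by
              rw [intervalIntegral.integral_of_le hst.le, integral_Ioc_eq_integral_Ioo]
      rw [hftc, hvar] at h1
      exact h1
    have hcs := cs hdc hst.le
    have hmono2 : ∫ x in Ioo s t', (deriv v x)^2 ≤ ∫ t in Ioo (0:ℝ) 1, (iteratedDeriv 1 v t)^2 := by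
      have h2 : ∫ x in Ioo (0:ℝ) 1, (deriv v x)^2 = ∫ t in Ioo (0:ℝ) 1, (iteratedDeriv 1 v t)^2 := by
        rw [iteratedDeriv_one]
      rw [← h2]
      exact setIntegral_mono_set (intOnIoo (hdc.pow 2) 0 1)
        (Filter.Eventually.of_forall fun t => sq_nonneg _) hsubIoo.eventuallyLE
    -- numeric contradiction
    have hX0 : 0 ≤ ∫ x in Ioo s t', |deriv v x| :=
      setIntegral_nonneg measurableSet_Ioo fun t _ => abs_nonneg _
    have hD0 : 0 ≤ ∫ x in Ioo s t', (deriv v x)^2 :=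
      setIntegral_nonneg measurableSet_Ioo fun t _ => sq_nonneg _
    have hone : (1:ℝ) ≤ (t' - s) * (CG k * (2*A + 2 + B)) := by
      have hd2 : ∫ x in Ioo s t', (deriv v x)^2 ≤ CG k * (2*A + 2 + B) := hmono2.trans hgn1
      nlinarith [hcs, h1le, hX0, hD0, hd2, sub_pos.2 hst]
    have hAlt : A < 1/(13 * CG k) := by
      calc A ≤ A + B := by linarith
        _ < c0 k := hsmall
        _ ≤ 1/(13 * CG k) := hc0a
    have hABlt : A + B < 1/100 := lt_of_lt_of_le hsmall hc0b
    have hy : A * (13 * CG k) < 1 := (lt_div_iff₀ (by positivity)).1 hAlt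
    nlinarith [hone, hm, hy, hABlt, hA0, hB0, hCG, mul_nonneg hA0 hCG.le]
  -- conclusion: v stays above -1/2, compare with (v-1)²
  have hw2 : ∫ t in Ioo (0:ℝ) 1, (v t - 1)^2 ≤ 9 * A := by
    have h1 : ∀ t ∈ Ioo (0:ℝ) 1, (v t - 1)^2 ≤ 9 * min ((v t + 1)^2) ((v t - 1)^2) :=
      fun t ht => shifted_le (hnd t ht)
    have h2 := setIntegral_mono_on (intOnIoo (by fun_prop : Continuous fun t => (v t - 1)^2) 0 1)
      ((intOnIoo hming 0 1).const_mul 9) measurableSet_Ioo h1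
    rwa [integral_const_mul, ← hA] at h2
  have hwc : ContDiff ℝ (k:ℕ∞) (fun t => v t - 1) := hv.sub contDiff_const
  have hgnl := gn (by omega : 1 ≤ k) hl hwc
  rw [iteratedDeriv_sub_one (by omega : 1 ≤ ℓ), iteratedDeriv_sub_one (by omega : 1 ≤ k)] at hgnl
  rw [← hB] at hgnl
  calc ∫ t in Ioo (0:ℝ) 1, (iteratedDeriv ℓ v t)^2
      ≤ CG k * ((∫ t in Ioo (0:ℝ) 1, (v t - 1)^2) + B) := hgnl
    _ ≤ 9 * CG k * (A + B) := by nlinarith [hw2, hCG, hB0]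

/-- Main inequality on the unit interval. -/
lemma unit {k ℓ : ℕ} (hk : 1 < k) (hl1 : 1 ≤ ℓ) (hl : ℓ ≤ k-1) {v : ℝ → ℝ}
    (hv : ContDiff ℝ (k:ℕ∞) v) :
    qunit k * ∫ t in Ioo (0:ℝ) 1, (iteratedDeriv ℓ v t)^2 ≤
      (∫ t in Ioo (0:ℝ) 1, min ((v t + 1)^2) ((v t - 1)^2)) +
        ∫ t in Ioo (0:ℝ) 1, (iteratedDeriv k v t)^2 := by
  set A := ∫ t in Ioo (0:ℝ) 1, min ((v t + 1)^2) ((v t - 1)^2) with hA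
  set B := ∫ t in Ioo (0:ℝ) 1, (iteratedDeriv k v t)^2 with hB
  set L := ∫ t in Ioo (0:ℝ) 1, (iteratedDeriv ℓ v t)^2 with hL
  have hA0 : 0 ≤ A := setIntegral_nonneg measurableSet_Ioo fun t _ => min_sq_nonneg _
  have hB0 : 0 ≤ B := setIntegral_nonneg measurableSet_Ioo fun t _ => sq_nonneg _
  have hL0 : 0 ≤ L := setIntegral_nonneg measurableSet_Ioo fun t _ => sq_nonneg _
  have hCG := CG_pos k
  have hc0 := c0_pos k
  have hq := qunit_pos k
  have hvc : Continuous v := hv.continuous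
  have hming : Continuous (fun t => min ((v t + 1)^2) ((v t - 1)^2)) :=
    Continuous.min (by fun_prop) (by fun_prop)
  by_cases hsm : A + B < c0 k
  · -- small-energy case
    obtain ⟨t₀, ht₀, hmin⟩ := exists_le_avg hming (fun t => min_sq_nonneg _) one_pos
    rw [show (2:ℝ)/(1-0) = 2 by norm_num, ← hA] at hmin
    have hkey : L ≤ 9 * CG k * (A + B) := by
      rcases le_or_gt ((v t₀ + 1)^2) ((v t₀ - 1)^2) with hcase | hcase
      · -- v t₀ near -1 : apply key_case to -v
        have h50 : (v t₀ + 1)^2 ≤ 2 * A := by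
          rw [min_eq_left hcase] at hmin; linarith
        have hAc : A < c0 k := by linarith
        have hc100 : c0 k ≤ 1/100 := min_le_right _ _
        have hv₀ : 1/2 < -(v t₀) := by nlinarith [h50]
        have hvneg : ContDiff ℝ (k:ℕ∞) (fun t => -(v t)) := hv.neg
        have hAe : (∫ t in Ioo (0:ℝ) 1, min ((-(v t) + 1)^2) ((-(v t) - 1)^2)) = A := by
          rw [hA]
          congr 1
          funext t
          exact min_sq_neg (v t)
        have hBe : (∫ t in Ioo (0:ℝ) 1, (iteratedDeriv k (fun t => -(v t)) t)^2) = B := by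
          rw [hB, iteratedDeriv_neg' k v]
          congr 1
          funext t
          ring
        have hLe : (∫ t in Ioo (0:ℝ) 1, (iteratedDeriv ℓ (fun t => -(v t)) t)^2) = L := by
          rw [hL, iteratedDeriv_neg' ℓ v]
          congr 1
          funext t
          ring
        have := key_case hk hl1 hl hvneg (by rw [hAe, hBe]; exact hsm) ht₀ hv₀
        rw [hAe, hBe, hLe] at this
        exact this
      · have h50 : (v t₀ - 1)^2 ≤ 2 * A := by
          rw [min_eq_right hcase.le] at hmin; linarith
        have hAc : A < c0 k := by linarith
        have hc100 : c0 k ≤ 1/100 := min_le_right _ _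
        have hv₀ : 1/2 < v t₀ := by nlinarith [h50]
        exact key_case hk hl1 hl hv hsm ht₀ hv₀
    have hq2 : qunit k ≤ 1/(9 * CG k) := min_le_right _ _
    calc qunit k * L ≤ (1/(9 * CG k)) * L := mul_le_mul_of_nonneg_right hq2 hL0
      _ ≤ (1/(9 * CG k)) * (9 * CG k * (A + B)) :=
          mul_le_mul_of_nonneg_left hkey (by positivity)
      _ = A + B := by field_simp
  · -- large-energy case
    push_neg at hsm
    have h2A : ∫ t in Ioo (0:ℝ) 1, v t ^ 2 ≤ 2*A + 2 := by
      have h2 := v2_bound hvc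
      rwa [← hA] at h2
    have hgnl := gn (by omega : 1 ≤ k) hl hv
    rw [← hB, ← hL] at hgnl
    have h2c : (2:ℝ) ≤ 2/(c0 k) * (A + B) := by
      rw [div_mul_eq_mul_div, le_div_iff₀ hc0]
      nlinarith [hsm]
    have hLbig : L ≤ CG k * (2 + 2/(c0 k)) * (A + B) := by
      have h1 : L ≤ CG k * (2*A + 2 + B) := by
        refine hgnl.trans ?_
        nlinarith [h2A, hCG]
      have h2 : 2*A + 2 + B ≤ (2 + 2/(c0 k)) * (A + B) := by nlinarith [h2c, hA0, hB0]
      calc L ≤ CG k * (2*A + 2 + B) := h1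
        _ ≤ CG k * ((2 + 2/(c0 k)) * (A + B)) := mul_le_mul_of_nonneg_left h2 hCG.le
        _ = CG k * (2 + 2/(c0 k)) * (A + B) := by ring
    have hq1 : qunit k ≤ 1/(CG k * (2 + 2/(c0 k))) := min_le_left _ _
    have hpos : 0 < CG k * (2 + 2/(c0 k)) := by positivity
    calc qunit k * L ≤ (1/(CG k * (2 + 2/(c0 k)))) * L := mul_le_mul_of_nonneg_right hq1 hL0
      _ ≤ (1/(CG k * (2 + 2/(c0 k)))) * (CG k * (2 + 2/(c0 k)) * (A + B)) :=
          mul_le_mul_of_nonneg_left hLbig (by positivity)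
      _ = A + B := by field_simp


lemma iteratedDeriv_affine {k : ℕ} {u : ℝ → ℝ} (hu : ContDiff ℝ (k:ℕ∞) u) (a c : ℝ) :
    ∀ j, j ≤ k → iteratedDeriv j (fun s => u (a + c*s)) =
      fun s => c^j * iteratedDeriv j u (a + c*s) := by
  intro j
  induction j with
  | zero => intro _; funext s; simp [iteratedDeriv_zero]
  | succ j ih =>
    intro hjk
    have hj : j ≤ k := by omega
    have hjlt : j < k := by omega
    rw [iteratedDeriv_succ, ih hj]
    funext s
    have hdiff : Differentiable ℝ (iteratedDeriv j u) :=
      hu.differentiable_iteratedDeriv j (Nat.cast_lt.mpr hjlt)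
    have haff : HasDerivAt (fun s : ℝ => a + c*s) c s := by
      simpa using ((hasDerivAt_id s).const_mul c).const_add a
    have h1 : HasDerivAt (iteratedDeriv j u) (iteratedDeriv (j+1) u (a + c*s)) (a + c*s) := by
      rw [iteratedDeriv_succ]
      exact (hdiff _).hasDerivAt
    have hcomp : HasDerivAt (fun s => iteratedDeriv j u (a + c*s))
        (iteratedDeriv (j+1) u (a + c*s) * c) s := by
      have := h1.comp s haff
      exact this
    have hmul : HasDerivAt (fun s => c^j * iteratedDeriv j u (a + c*s))
        (c^j * (iteratedDeriv (j+1) u (a + c*s) * c)) s := hcomp.const_mul _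
    rw [hmul.deriv]
    ring

lemma scale_int {g : ℝ → ℝ} (hg : Continuous g) {a b : ℝ} (h : a < b) :
    ∫ s in Ioo (0:ℝ) 1, g (a + (b-a)*s) = (b-a)⁻¹ * ∫ t in Ioo a b, g t := by
  have hc : b - a ≠ 0 := sub_ne_zero.2 h.ne'
  have h1 : ∫ s in Ioo (0:ℝ) 1, g (a + (b-a)*s) = ∫ s in (0:ℝ)..1, g ((b-a)*s + a) := by
    rw [intervalIntegral.integral_of_le zero_le_one, integral_Ioc_eq_integral_Ioo]
    congr 1
    funext s
    congr 1
    ring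
  rw [h1, intervalIntegral.integral_comp_mul_add g hc a, smul_eq_mul,
    show (b-a)*0 + a = a by ring, show (b-a)*1 + a = b by ring,
    intervalIntegral.integral_of_le h.le, integral_Ioc_eq_integral_Ioo]


end Statement1Aux

open MeasureTheory

/-- One-dimensional nonlinear interpolation inequality for every
intermediate derivative `ℓ ∈ {1,…,k-1}`: there is a constant `q'_ℓ > 0`,
independent of the interval, such that for every bounded open interval `(a,b)`,
every `q < q'_ℓ` and every `u` of class `C^k`,
`q ∫ |u^(ℓ)|² ≤ (b-a)^{-2ℓ} ∫ W(u) + (b-a)^{2(k-ℓ)} ∫ |u^(k)|²`. -/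
theorem statement1 (k : ℕ) (hk : 1 < k) (W : ℝ → ℝ)
    (hWcont : Continuous W) (hWnonneg : ∀ s, 0 ≤ W s)
    (hH2 : ∀ s : ℝ, min ((s + 1) ^ 2) ((s - 1) ^ 2) ≤ W s) :
    ∀ ℓ : ℕ, 1 ≤ ℓ → ℓ ≤ k - 1 →
      ∃ qℓ : ℝ, 0 < qℓ ∧
        ∀ a b : ℝ, a < b → ∀ q : ℝ, q < qℓ →
          ∀ u : ℝ → ℝ, ContDiff ℝ (k : ℕ∞) u →
            q * ∫ t in Set.Ioo a b, (iteratedDeriv ℓ u t) ^ 2 ≤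
              ((b - a) ^ (2 * ℓ))⁻¹ * (∫ t in Set.Ioo a b, W (u t)) +
                (b - a) ^ (2 * (k - ℓ)) * ∫ t in Set.Ioo a b, (iteratedDeriv k u t) ^ 2 := by
  intro ℓ hl1 hl
  refine ⟨Statement1Aux.qunit k, Statement1Aux.qunit_pos k, ?_⟩
  intro a b hab q hq u hu
  set c := b - a with hcdef
  have hc0 : 0 < c := sub_pos.2 hab
  have hcne : c ≠ 0 := hc0.ne'
  have huc : Continuous u := hu.continuous
  have hva : ContDiff ℝ (k:ℕ∞) (fun s => u (a + c*s)) :=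
    hu.comp (contDiff_const.add (contDiff_const.mul contDiff_id))
  have hcont_l : Continuous (iteratedDeriv ℓ u) :=
    hu.continuous_iteratedDeriv ℓ (Nat.cast_le.mpr (by omega))
  have hcont_k : Continuous (iteratedDeriv k u) :=
    hu.continuous_iteratedDeriv k (Nat.cast_le.mpr le_rfl)
  have hming : Continuous (fun t => min ((u t + 1)^2) ((u t - 1)^2)) :=
    Continuous.min (by fun_prop) (by fun_prop)
  -- the unit-interval inequality, in beta-normal form
  have key : Statement1Aux.qunit k * ∫ t in Set.Ioo (0:ℝ) 1, (c^ℓ * iteratedDeriv ℓ u (a + c*t))^2 ≤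
      (∫ t in Set.Ioo (0:ℝ) 1, min ((u (a + c*t) + 1)^2) ((u (a + c*t) - 1)^2)) +
        ∫ t in Set.Ioo (0:ℝ) 1, (c^k * iteratedDeriv k u (a + c*t))^2 := by
    have h0 := Statement1Aux.unit hk hl1 hl hva
    rw [Statement1Aux.iteratedDeriv_affine hu a c ℓ (by omega),
      Statement1Aux.iteratedDeriv_affine hu a c k le_rfl] at h0
    exact h0
  -- pull out the powers of c
  have hIl : ∫ t in Set.Ioo (0:ℝ) 1, (c^ℓ * iteratedDeriv ℓ u (a + c*t))^2
      = c^(2*ℓ) * ∫ t in Set.Ioo (0:ℝ) 1, (iteratedDeriv ℓ u (a + c*t))^2 := by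
    rw [← integral_const_mul]
    congr 1
    funext t
    rw [mul_pow, ← pow_mul, mul_comm ℓ 2]
  have hIk : ∫ t in Set.Ioo (0:ℝ) 1, (c^k * iteratedDeriv k u (a + c*t))^2
      = c^(2*k) * ∫ t in Set.Ioo (0:ℝ) 1, (iteratedDeriv k u (a + c*t))^2 := by
    rw [← integral_const_mul]
    congr 1
    funext t
    rw [mul_pow, ← pow_mul, mul_comm k 2]
  rw [hIl, hIk] at key
  -- change of variables
  have e1 : ∫ t in Set.Ioo (0:ℝ) 1, (iteratedDeriv ℓ u (a + c*t))^2
      = c⁻¹ * ∫ t in Set.Ioo a b, (iteratedDeriv ℓ u t)^2 :=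
    Statement1Aux.scale_int (hcont_l.pow 2) hab
  have e2 : ∫ t in Set.Ioo (0:ℝ) 1, min ((u (a + c*t) + 1)^2) ((u (a + c*t) - 1)^2)
      = c⁻¹ * ∫ t in Set.Ioo a b, min ((u t + 1)^2) ((u t - 1)^2) :=
    Statement1Aux.scale_int hming hab
  have e3 : ∫ t in Set.Ioo (0:ℝ) 1, (iteratedDeriv k u (a + c*t))^2
      = c⁻¹ * ∫ t in Set.Ioo a b, (iteratedDeriv k u t)^2 :=
    Statement1Aux.scale_int (hcont_k.pow 2) hab
  rw [e1, e2, e3] at key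
  set P := ∫ t in Set.Ioo a b, (iteratedDeriv ℓ u t)^2 with hP
  set M := ∫ t in Set.Ioo a b, min ((u t + 1)^2) ((u t - 1)^2) with hM
  set Q := ∫ t in Set.Ioo a b, (iteratedDeriv k u t)^2 with hQ
  have hP0 : 0 ≤ P := setIntegral_nonneg measurableSet_Ioo fun t _ => sq_nonneg _
  have hQ0 : 0 ≤ Q := setIntegral_nonneg measurableSet_Ioo fun t _ => sq_nonneg _
  have hMW : M ≤ ∫ t in Set.Ioo a b, W (u t) :=
    setIntegral_mono_on (Statement1Aux.intOnIoo hming a b)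
      (Statement1Aux.intOnIoo (hWcont.comp huc) a b) measurableSet_Ioo
      (fun t _ => hH2 (u t))
  -- clear the factor c
  have key2 : Statement1Aux.qunit k * (c^(2*ℓ) * P) ≤ M + c^(2*k) * Q := by
    have h1 := mul_le_mul_of_nonneg_left key hc0.le
    calc Statement1Aux.qunit k * (c^(2*ℓ) * P)
        = c * (Statement1Aux.qunit k * (c^(2*ℓ) * (c⁻¹ * P))) := by
          field_simp
          try ring
      _ ≤ c * (c⁻¹ * M + c^(2*k) * (c⁻¹ * Q)) := h1
      _ = M + c^(2*k) * Q := by field_simp; try ring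
  -- divide by c^(2ℓ)
  have hcl : (0:ℝ) < c^(2*ℓ) := by positivity
  have key3 : Statement1Aux.qunit k * P ≤ (c^(2*ℓ))⁻¹ * M + c^(2*(k-ℓ)) * Q := by
    have h1 := mul_le_mul_of_nonneg_left key2 (inv_nonneg.2 hcl.le)
    have h2 : (c^(2*ℓ))⁻¹ * (Statement1Aux.qunit k * (c^(2*ℓ) * P)) =
        Statement1Aux.qunit k * P := by field_simp; try ring
    have h3 : (c^(2*ℓ))⁻¹ * (M + c^(2*k) * Q) = (c^(2*ℓ))⁻¹ * M + c^(2*(k-ℓ)) * Q := by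
      have h2k : 2*k = 2*(k-ℓ) + 2*ℓ := by omega
      rw [h2k, pow_add]
      field_simp
      try ring
    rw [h2, h3] at h1
    exact h1
  have hqP : q * P ≤ Statement1Aux.qunit k * P := mul_le_mul_of_nonneg_right hq.le hP0
  have hMfin : (c^(2*ℓ))⁻¹ * M ≤ (c^(2*ℓ))⁻¹ * ∫ t in Set.Ioo a b, W (u t) :=
    mul_le_mul_of_nonneg_left hMW (inv_nonneg.2 hcl.le)
  linarith
end

section
/- Let k > 1 be an integer and let W : ℝ → ℝ be continuous, nonnegative and satisfy (H2). There exist positive constants q̄_1,…,q̄_{k-1} such that for all real coefficients q_1,…,q_{k-1} with q_ℓ > -q̄_ℓ for every ℓ ∈ {1,…,k-1}, and with q_k := 1, there exists δ > 0 such that for every open interval I ⊂ ℝ of length 1 and every function u : ℝ → ℝ of class C^k, ∫_I [ W(u) + Σ_{ℓ=1}^k q_ℓ |u^{(ℓ)}|² ] dt ≥ δ · ∫_I [ W(u) + Σ_{ℓ=1}^k |u^{(ℓ)}|² ] dt. -/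
open MeasureTheory Set




lemma contIntegrableOn {f : ℝ → ℝ} (hf : Continuous f) (a b : ℝ) :
    IntegrableOn f (Ioo a b) := hf.integrableOn_Icc.mono_set Ioo_subset_Icc_self

lemma cs_helper {f : ℝ → ℝ} (hf : Continuous f) (p q : ℝ) (hpq : p ≤ q) :
    (∫ s in Icc p q, |f s|) ^ 2 ≤ (q - p) * ∫ s in Icc p q, (f s) ^ 2 := by
  rcases eq_or_lt_of_le hpq with rfl | hpq'
  · simp [Real.volume_Icc]
  have hqp : 0 < q - p := by linarith
  set A := ∫ s in Icc p q, |f s| with hA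
  set B := ∫ s in Icc p q, (f s) ^ 2 with hB
  have hBnn : 0 ≤ B := setIntegral_nonneg measurableSet_Icc (fun x _ => sq_nonneg _)
  have hAnn : 0 ≤ A := setIntegral_nonneg measurableSet_Icc (fun x _ => abs_nonneg _)
  have key : ∀ c : ℝ, 0 < c → A ≤ (c * B + (q - p) / c) / 2 := by
    intro c hc
    have h1 : ∀ x ∈ Icc p q, |f x| ≤ (c * (f x) ^ 2 + 1 / c) / 2 := by
      intro x _
      have h' : 2 * c * |f x| ≤ c ^ 2 * (f x) ^ 2 + 1 := by
        nlinarith [sq_nonneg (c * |f x| - 1), sq_abs (f x)]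
      have h'' : |f x| ≤ (c ^ 2 * (f x) ^ 2 + 1) / (2 * c) := by
        rw [le_div_iff₀ (by positivity)]; linarith
      calc |f x| ≤ (c ^ 2 * (f x) ^ 2 + 1) / (2 * c) := h''
        _ = (c * (f x) ^ 2 + 1 / c) / 2 := by field_simp
    have h2 : A ≤ ∫ s in Icc p q, (c * (f s) ^ 2 + 1 / c) / 2 := by
      apply setIntegral_mono_on
      · exact (hf.abs).integrableOn_Icc
      · exact ((continuous_const.mul (hf.pow 2)).add continuous_const).div_const 2 |>.integrableOn_Icc
      · exact measurableSet_Icc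
      · exact h1
    calc A ≤ _ := h2
      _ = (c * B + (q - p) * (1 / c)) / 2 := by
          rw [integral_div, integral_add, integral_const_mul, setIntegral_const]
          · simp [measureReal_def, Real.volume_Icc, ENNReal.toReal_ofReal hqp.le, smul_eq_mul, hB]
          · exact (continuous_const.mul (hf.pow 2)).integrableOn_Icc
          · exact continuous_const.integrableOn_Icc
      _ ≤ (c * B + (q - p) / c) / 2 := by rw [mul_one_div]
  rcases eq_or_lt_of_le hBnn with hB0 | hB0
  · have hA0 : A = 0 := by
      by_contra h
      have hA0 : 0 < A := lt_of_le_of_ne hAnn (Ne.symm h)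
      have hkey := key ((q - p) / A + 1) (by positivity)
      rw [← hB0] at hkey
      have h2 : (q - p) / ((q - p) / A + 1) < A := by
        rw [div_lt_iff₀ (by positivity)]
        have hAA : A * ((q - p) / A) = q - p := by field_simp
        nlinarith [hAA, hA0]
      simp only [mul_zero, zero_add] at hkey
      linarith
    rw [hA0, ← hB0]; simp
  · set c := Real.sqrt ((q - p) / B) with hc
    have hcpos : 0 < c := Real.sqrt_pos.2 (by positivity)
    have hcc : c * c = (q - p) / B := Real.mul_self_sqrt (by positivity)
    have h1 : c * B = (q - p) / c := by
      rw [eq_div_iff hcpos.ne']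
      calc c * B * c = (c * c) * B := by ring
        _ = (q - p) / B * B := by rw [hcc]
        _ = q - p := by field_simp
    have hkey := key c hcpos
    rw [← h1] at hkey
    have h2 : A ≤ c * B := by linarith
    calc A ^ 2 ≤ (c * B) ^ 2 := pow_le_pow_left₀ hAnn h2 2
      _ = (c * c) * (B * B) := by ring
      _ = (q - p) / B * (B * B) := by rw [hcc]
      _ = (q - p) * B := by field_simp


lemma sq_int_lower {w : ℝ → ℝ} (hw : Continuous w) {p q a b : ℝ} (hpq : p < q)
    (hsub : Icc p q ⊆ Icc a b) {x₀ : ℝ} (hx₀ : x₀ ∈ Icc p q)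
    (hmin : ∀ x ∈ Icc p q, (w x₀) ^ 2 ≤ (w x) ^ 2) :
    (q - p) * (w x₀) ^ 2 ≤ ∫ s in Ioo a b, (w s) ^ 2 := by
  have h1 : ∫ s in Icc p q, (w x₀) ^ 2 ≤ ∫ s in Icc p q, (w s) ^ 2 := by
    apply setIntegral_mono_on
    · exact integrableOn_const (by simp [Real.volume_Icc])
    · exact (hw.pow 2).integrableOn_Icc
    · exact measurableSet_Icc
    · exact hmin
  have h2 : ∫ s in Icc p q, (w s) ^ 2 ≤ ∫ s in Icc a b, (w s) ^ 2 := by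
    apply setIntegral_mono_set ((hw.pow 2).integrableOn_Icc)
    · exact Filter.Eventually.of_forall (fun x => sq_nonneg _)
    · exact HasSubset.Subset.eventuallyLE hsub
  rw [setIntegral_const, measureReal_def, Real.volume_Icc, smul_eq_mul,
    ENNReal.toReal_ofReal (by linarith : (0:ℝ) ≤ q - p)] at h1
  rw [← integral_Icc_eq_integral_Ioo]
  linarith

set_option maxHeartbeats 1000000 in
lemma grid {w : ℝ → ℝ} (hw : ContDiff ℝ 2 w) {h a t : ℝ} (hh0 : 0 < h) (hh1 : h ≤ 1)
    (ht : t ∈ Icc a (a + 1)) :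
    (deriv w t) ^ 2 ≤ 216 / h ^ 3 * (∫ s in Ioo a (a + 1), (w s) ^ 2)
      + 2 * h * ∫ s in Ioo a (a + 1), (deriv (deriv w) s) ^ 2 := by
  have hc0 : Continuous w := hw.continuous
  have hd1 : Differentiable ℝ w := hw.differentiable (by norm_num)
  have hd2 : Differentiable ℝ (deriv w) := by
    have := hw.differentiable_iteratedDeriv 1 (by norm_num)
    simpa using this
  have hc2 : Continuous (deriv (deriv w)) := by
    have := hw.continuous_iteratedDeriv 2 (by norm_num)
    rwa [iteratedDeriv_succ, iteratedDeriv_one] at this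
  set p := min t (a + 1 - h) with hp
  have hpt : p ≤ t := min_le_left _ _
  have hpa : a ≤ p := le_min ht.1 (by linarith [ht.1, ht.2])
  have hph : p + h ≤ a + 1 := by
    have := min_le_right t (a + 1 - h); simp only [← hp] at this; linarith
  have htp : t ≤ p + h := by
    rcases le_total t (a + 1 - h) with h' | h'
    · have : p = t := min_eq_left h'; linarith
    · have : p = a + 1 - h := min_eq_right h'; linarith [ht.2]
  set I2 := ∫ s in Ioo a (a + 1), (w s) ^ 2 with hI2
  set Ik := ∫ s in Ioo a (a + 1), (deriv (deriv w) s) ^ 2 with hIk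
  have hI2nn : 0 ≤ I2 := setIntegral_nonneg measurableSet_Ioo (fun x _ => sq_nonneg _)
  have hIknn : 0 ≤ Ik := setIntegral_nonneg measurableSet_Ioo (fun x _ => sq_nonneg _)
  -- min points
  have hne1 : (Icc p (p + h / 3)).Nonempty := nonempty_Icc.2 (by linarith)
  have hne2 : (Icc (p + 2 * h / 3) (p + h)).Nonempty := nonempty_Icc.2 (by linarith)
  obtain ⟨x₀, hx₀mem, hx₀min⟩ := isCompact_Icc.exists_isMinOn hne1 ((hc0.pow 2).continuousOn)
  obtain ⟨y₀, hy₀mem, hy₀min⟩ := isCompact_Icc.exists_isMinOn hne2 ((hc0.pow 2).continuousOn)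
  have hlt1 : p < p + h / 3 := by linarith
  have hlt2 : p + 2 * h / 3 < p + h := by linarith
  have hss1 : Icc p (p + h / 3) ⊆ Icc a (a + 1) := Icc_subset_Icc hpa (by linarith)
  have hss2 : Icc (p + 2 * h / 3) (p + h) ⊆ Icc a (a + 1) := Icc_subset_Icc (by linarith) (by linarith)
  have f1 : (h / 3) * (w x₀) ^ 2 ≤ I2 := by
    have := sq_int_lower hc0 hlt1 hss1 hx₀mem (fun x hx => hx₀min hx)
    simpa using this
  have f2 : (h / 3) * (w y₀) ^ 2 ≤ I2 := by
    have h' := sq_int_lower hc0 hlt2 hss2 hy₀mem (fun x hx => hy₀min hx)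
    have h23 : p + h - (p + 2 * h / 3) = h / 3 := by ring
    rw [h23] at h'
    exact h'
  -- MVT
  have hxy : x₀ < y₀ := lt_of_le_of_lt hx₀mem.2 (lt_of_lt_of_le (by linarith) hy₀mem.1)
  have hyx0 : 0 < y₀ - x₀ := by linarith
  obtain ⟨σ, hσmem, hσeq⟩ := exists_hasDerivAt_eq_slope w (deriv w) hxy
    hc0.continuousOn (fun x _ => (hd1 x).hasDerivAt)
  have hyx3 : h / 3 ≤ y₀ - x₀ := by
    have := hx₀mem.2; have := hy₀mem.1; linarith
  have f3 : h * |deriv w σ| ≤ 3 * (|w x₀| + |w y₀|) := by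
    rw [hσeq, abs_div, abs_of_pos hyx0, ← mul_div_assoc, div_le_iff₀ hyx0]
    have h1 : |w y₀ - w x₀| ≤ |w x₀| + |w y₀| := by
      calc |w y₀ - w x₀| ≤ |w y₀| + |w x₀| := abs_sub _ _
        _ = |w x₀| + |w y₀| := by ring
    have e1 := mul_le_mul_of_nonneg_left h1 hh0.le
    have e2 := mul_le_mul_of_nonneg_left hyx3
      (by positivity : (0:ℝ) ≤ 3 * (|w x₀| + |w y₀|))
    nlinarith [e1, e2]
  -- FTC
  have hσIcc : σ ∈ Icc p (p + h) :=
    ⟨le_trans hx₀mem.1 hσmem.1.le, le_trans hσmem.2.le hy₀mem.2⟩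
  have htIcc : t ∈ Icc p (p + h) := ⟨hpt, htp⟩
  set S2 := ∫ s in Icc p (p + h), |deriv (deriv w) s| with hS2
  have hS2nn : 0 ≤ S2 := setIntegral_nonneg measurableSet_Icc (fun x _ => abs_nonneg _)
  have f4 : |deriv w t| ≤ |deriv w σ| + S2 := by
    have hftc : ∫ x in σ..t, deriv (deriv w) x = deriv w t - deriv w σ :=
      intervalIntegral.integral_deriv_eq_sub (fun x _ => hd2 x) (hc2.intervalIntegrable σ t)
    have hbd : |∫ x in σ..t, deriv (deriv w) x| ≤ S2 := by
      have h1 : |∫ x in σ..t, deriv (deriv w) x| ≤ ∫ x in Set.uIoc σ t, |deriv (deriv w) x| := by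
        have := intervalIntegral.norm_integral_le_integral_norm_uIoc
          (f := fun x => deriv (deriv w) x) (a := σ) (b := t) (μ := volume)
        simpa [Real.norm_eq_abs] using this
      refine h1.trans ?_
      apply setIntegral_mono_set (hc2.abs.integrableOn_Icc)
      · exact Filter.Eventually.of_forall (fun x => abs_nonneg _)
      · exact HasSubset.Subset.eventuallyLE
          (le_trans uIoc_subset_uIcc (uIcc_subset_Icc hσIcc htIcc))
    calc |deriv w t| = |deriv w σ + (deriv w t - deriv w σ)| := by ring_nf
      _ ≤ |deriv w σ| + |deriv w t - deriv w σ| := abs_add_le _ _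
      _ ≤ |deriv w σ| + S2 := by rw [← hftc]; linarith [hbd]
  have f5 : S2 ^ 2 ≤ h * Ik := by
    have hcs := cs_helper hc2 p (p + h) (by linarith)
    have hext : ∫ s in Icc p (p + h), (deriv (deriv w) s) ^ 2 ≤ Ik := by
      rw [hIk, ← integral_Icc_eq_integral_Ioo]
      apply setIntegral_mono_set ((hc2.pow 2).integrableOn_Icc)
      · exact Filter.Eventually.of_forall (fun x => sq_nonneg _)
      · exact HasSubset.Subset.eventuallyLE (Icc_subset_Icc hpa hph)
    calc S2 ^ 2 ≤ (p + h - p) * ∫ s in Icc p (p + h), (deriv (deriv w) s) ^ 2 := hcs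
      _ ≤ h * Ik := by
          rw [show p + h - p = h by ring]
          exact mul_le_mul_of_nonneg_left hext hh0.le
  -- combine
  clear_value I2 Ik S2 p
  have step1 : (deriv w t) ^ 2 ≤ 2 * (deriv w σ) ^ 2 + 2 * S2 ^ 2 := by
    nlinarith [sq_abs (deriv w t), sq_abs (deriv w σ), f4, hS2nn, abs_nonneg (deriv w σ),
      sq_nonneg (|deriv w σ| - S2), abs_nonneg (deriv w t)]
  have step2 : h ^ 2 * (deriv w σ) ^ 2 ≤ 18 * ((w x₀) ^ 2 + (w y₀) ^ 2) := by
    have h1 : (h * |deriv w σ|) ^ 2 ≤ (3 * (|w x₀| + |w y₀|)) ^ 2 :=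
      pow_le_pow_left₀ (by positivity) f3 2
    nlinarith [sq_abs (deriv w σ), sq_abs (w x₀), sq_abs (w y₀),
      sq_nonneg (|w x₀| - |w y₀|), h1]
  have H : h ^ 3 * (deriv w t) ^ 2 ≤ 216 * I2 + 2 * h ^ 4 * Ik := by
    have e1 := mul_le_mul_of_nonneg_left step1 (by positivity : (0:ℝ) ≤ h ^ 3)
    have e2 := mul_le_mul_of_nonneg_left step2 (by positivity : (0:ℝ) ≤ 2 * h)
    have e3 := mul_le_mul_of_nonneg_left f5 (by positivity : (0:ℝ) ≤ 2 * h ^ 3)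
    have e4 := mul_le_mul_of_nonneg_left f1 (by norm_num : (0:ℝ) ≤ 108)
    have e5 := mul_le_mul_of_nonneg_left f2 (by norm_num : (0:ℝ) ≤ 108)
    linarith [e1, e2, e3, e4, e5]
  have h3pos : (0:ℝ) < h ^ 3 := by positivity
  calc (deriv w t) ^ 2 ≤ (216 * I2 + 2 * h ^ 4 * Ik) / h ^ 3 :=
        (le_div_iff₀ h3pos).2 (by nlinarith [H])
    _ = 216 / h ^ 3 * I2 + 2 * h * Ik := by field_simp




lemma cast_le_withTop {p q : ℕ} (h : p ≤ q) :
    ((p : ℕ) : WithTop ℕ∞) ≤ (((q : ℕ) : ℕ∞) : WithTop ℕ∞) := by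
  exact_mod_cast h

lemma contDiff_two_iteratedDeriv {u : ℝ → ℝ} {n j : ℕ} (hu : ContDiff ℝ (n : ℕ∞) u)
    (hjn : j + 2 ≤ n) : ContDiff ℝ 2 (iteratedDeriv j u) := by
  rw [iteratedDeriv_eq_iterate]
  have h : ContDiff ℝ ((2 + j : ℕ) : ℕ∞) u := hu.of_le (by exact_mod_cast (by omega : 2 + j ≤ n))
  have := ContDiff.iterate_deriv' 2 j (by exact_mod_cast h)
  exact_mod_cast this

lemma integral_sq_le_of_ptwise {g : ℝ → ℝ} (hg : Continuous g) {a c : ℝ}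
    (hc : ∀ t ∈ Icc a (a + 1), (g t) ^ 2 ≤ c) :
    ∫ s in Ioo a (a + 1), (g s) ^ 2 ≤ c := by
  have h1 : ∫ s in Ioo a (a + 1), (g s) ^ 2 ≤ ∫ _s in Ioo a (a + 1), c := by
    apply setIntegral_mono_on (contIntegrableOn (hg.pow 2) _ _)
    · exact integrableOn_const (by simp [Real.volume_Ioo])
    · exact measurableSet_Ioo
    · exact fun t ht => hc t (Ioo_subset_Icc_self ht)
  rwa [setIntegral_const, measureReal_def, Real.volume_Ioo, show a + 1 - a = 1 by ring, ENNReal.ofReal_one,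
    ENNReal.toReal_one, one_smul] at h1

lemma interp : ∀ m : ℕ, ∀ ε : ℝ, 0 < ε → ∃ A : ℝ, 0 < A ∧
    ∀ u : ℝ → ℝ, ContDiff ℝ ((m + 2 : ℕ) : ℕ∞) u → ∀ a : ℝ, ∀ ℓ : ℕ, 1 ≤ ℓ → ℓ ≤ m + 1 →
      ∀ t ∈ Icc a (a + 1), (iteratedDeriv ℓ u t) ^ 2 ≤
        A * (∫ s in Ioo a (a + 1), (u s) ^ 2)
          + ε * ∫ s in Ioo a (a + 1), (iteratedDeriv (m + 2) u s) ^ 2 := by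
  intro m
  induction m with
  | zero =>
    intro ε hε
    set h := min 1 (ε / 2) with hh
    have hh0 : 0 < h := lt_min one_pos (by linarith)
    have hh1 : h ≤ 1 := min_le_left _ _
    refine ⟨216 / h ^ 3, by positivity, ?_⟩
    intro u hu a ℓ hℓ1 hℓ2 t ht
    have hℓ : ℓ = 1 := by omega
    subst hℓ
    have hIknn : 0 ≤ ∫ s in Ioo a (a + 1), (iteratedDeriv 2 u s) ^ 2 :=
      setIntegral_nonneg measurableSet_Ioo (fun x _ => sq_nonneg _)
    have hgrid := grid (w := u) (by exact_mod_cast hu) hh0 hh1 ht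
    have h2 : deriv (deriv u) = iteratedDeriv 2 u := by
      rw [iteratedDeriv_succ, iteratedDeriv_one]
    rw [iteratedDeriv_one]
    rw [h2] at hgrid
    have : 2 * h ≤ ε := by
      have := min_le_right 1 (ε / 2); rw [← hh] at this; linarith
    nlinarith [hgrid, hIknn]
  | succ m IH =>
    intro ε hε
    set h := min 1 (ε / 4) with hh
    have hh0 : 0 < h := lt_min one_pos (by linarith)
    have hh1 : h ≤ 1 := min_le_left _ _
    have h4ε : 4 * h ≤ ε := by
      have := min_le_right 1 (ε / 4); rw [← hh] at this; linarith
    set B : ℝ := 216 / h ^ 3 with hB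
    have hBpos : 0 < B := by positivity
    obtain ⟨A', hA'pos, hA'⟩ := IH (1 / (2 * B)) (by positivity)
    obtain ⟨A'', hA''pos, hA''⟩ := IH 1 one_pos
    refine ⟨A'' + 2 * B * A', by positivity, ?_⟩
    intro u hu a ℓ hℓ1 hℓ2 t ht
    have hu' : ContDiff ℝ ((m + 2 : ℕ) : ℕ∞) u :=
      hu.of_le (by exact_mod_cast (by omega : m + 2 ≤ m + 1 + 2))
    set E0 := ∫ s in Ioo a (a + 1), (u s) ^ 2 with hE0
    set X := ∫ s in Ioo a (a + 1), (iteratedDeriv (m + 2) u s) ^ 2 with hX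
    set Y := ∫ s in Ioo a (a + 1), (iteratedDeriv (m + 3) u s) ^ 2 with hY
    have hE0nn : 0 ≤ E0 := setIntegral_nonneg measurableSet_Ioo (fun x _ => sq_nonneg _)
    have hXnn : 0 ≤ X := setIntegral_nonneg measurableSet_Ioo (fun x _ => sq_nonneg _)
    have hYnn : 0 ≤ Y := setIntegral_nonneg measurableSet_Ioo (fun x _ => sq_nonneg _)
    -- grid applied to w = iteratedDeriv (m+1) u
    have hw2 : ContDiff ℝ 2 (iteratedDeriv (m + 1) u) :=
      contDiff_two_iteratedDeriv hu (by omega)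
    have hgrid : ∀ t' ∈ Icc a (a + 1), (iteratedDeriv (m + 2) u t') ^ 2 ≤
        B * (∫ s in Ioo a (a + 1), (iteratedDeriv (m + 1) u s) ^ 2) + 2 * h * Y := by
      intro t' ht'
      have := grid hw2 hh0 hh1 ht'
      rw [← iteratedDeriv_succ, ← iteratedDeriv_succ] at this
      exact this
    -- IH pointwise at ℓ = m+1 and integrate
    have hmid : ∫ s in Ioo a (a + 1), (iteratedDeriv (m + 1) u s) ^ 2 ≤
        A' * E0 + 1 / (2 * B) * X := by
      apply integral_sq_le_of_ptwise (hu.continuous_iteratedDeriv (m + 1)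
        (cast_le_withTop (by omega)))
      intro t' ht'
      exact hA' u hu' a (m + 1) (by omega) (by omega) t' ht'
    have hptk : ∀ t' ∈ Icc a (a + 1), (iteratedDeriv (m + 2) u t') ^ 2 ≤
        B * A' * E0 + (1 / 2) * X + 2 * h * Y := by
      intro t' ht'
      have h1 := hgrid t' ht'
      have h2 := mul_le_mul_of_nonneg_left hmid hBpos.le
      have hBX : B * (1 / (2 * B) * X) = (1 / 2) * X := by field_simp
      nlinarith [h1, h2]
    have hXbound : X ≤ 2 * B * A' * E0 + 4 * h * Y := by
      have h1 : X ≤ B * A' * E0 + (1 / 2) * X + 2 * h * Y := by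
        apply integral_sq_le_of_ptwise (hu.continuous_iteratedDeriv (m + 2)
          (cast_le_withTop (by omega)))
        exact hptk
      linarith
    rcases Nat.lt_or_ge ℓ (m + 2) with hcase | hcase
    · -- ℓ ≤ m + 1 : use IH with ε = 1
      have h1 := hA'' u hu' a ℓ hℓ1 (by omega) t ht
      calc (iteratedDeriv ℓ u t) ^ 2 ≤ A'' * E0 + 1 * X := h1
        _ ≤ A'' * E0 + (2 * B * A' * E0 + 4 * h * Y) := by linarith [hXbound]
        _ ≤ (A'' + 2 * B * A') * E0 + ε * Y := by nlinarith [h4ε, hYnn]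
    · -- ℓ = m + 2
      have hℓeq : ℓ = m + 2 := by omega
      subst hℓeq
      have h1 := hptk t ht
      calc (iteratedDeriv (m + 2) u t) ^ 2 ≤ B * A' * E0 + (1 / 2) * X + 2 * h * Y := h1
        _ ≤ B * A' * E0 + (1 / 2) * (2 * B * A' * E0 + 4 * h * Y) + 2 * h * Y := by
            linarith [hXbound]
        _ ≤ (A'' + 2 * B * A') * E0 + ε * Y := by nlinarith [h4ε, hYnn, hA''pos, hE0nn]


lemma iteratedDeriv_succ_sub_const (j : ℕ) (c : ℝ) (u : ℝ → ℝ) :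
    iteratedDeriv (j + 1) (fun s => u s - c) = iteratedDeriv (j + 1) u := by
  rw [iteratedDeriv_succ', iteratedDeriv_succ']
  have hder : (deriv fun s => u s - c) = deriv u := by
    funext x
    exact deriv_sub_const c
  rw [hder]

lemma slope_bound {u : ℝ → ℝ} (hd : Differentiable ℝ u) {a C x y : ℝ}
    (hx : x ∈ Icc a (a + 1)) (hy : y ∈ Icc a (a + 1))
    (hC : ∀ t ∈ Icc a (a + 1), (deriv u t) ^ 2 ≤ C) :
    (u y - u x) ^ 2 ≤ C * (y - x) ^ 2 := by
  have key : ∀ p q : ℝ, p ∈ Icc a (a + 1) → q ∈ Icc a (a + 1) → p < q →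
      (u q - u p) ^ 2 ≤ C * (q - p) ^ 2 := by
    intro p q hp hq hpq
    obtain ⟨ξ, hξ, hξeq⟩ := exists_hasDerivAt_eq_slope u (deriv u) hpq
      hd.continuous.continuousOn (fun z _ => (hd z).hasDerivAt)
    have hξI : ξ ∈ Icc a (a + 1) := ⟨le_trans hp.1 hξ.1.le, le_trans hξ.2.le hq.2⟩
    have h1 := hC ξ hξI
    have h2 : (u q - u p) = deriv u ξ * (q - p) := by
      rw [hξeq, div_mul_cancel₀]
      exact ne_of_gt (by linarith)
    rw [h2, mul_pow]
    exact mul_le_mul_of_nonneg_right h1 (sq_nonneg _)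
  rcases lt_trichotomy x y with hxy | hxy | hxy
  · exact key x y hx hy hxy
  · subst hxy; simp
  · have := key y x hy hx hxy
    calc (u y - u x) ^ 2 = (u x - u y) ^ 2 := by ring
      _ ≤ C * (x - y) ^ 2 := this
      _ = C * (y - x) ^ 2 := by ring

set_option maxHeartbeats 2000000 in
lemma keyLemma (m : ℕ) (W : ℝ → ℝ) (hWcont : Continuous W) (hWnonneg : ∀ s, 0 ≤ W s)
    (hH2 : ∀ s : ℝ, min ((s + 1) ^ 2) ((s - 1) ^ 2) ≤ W s) :
    ∃ C : ℝ, 0 < C ∧ ∀ u : ℝ → ℝ, ContDiff ℝ ((m + 2 : ℕ) : ℕ∞) u → ∀ a : ℝ,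
      ∀ ℓ : ℕ, 1 ≤ ℓ → ℓ ≤ m + 1 →
      ∫ s in Ioo a (a + 1), (iteratedDeriv ℓ u s) ^ 2 ≤
        C * ((∫ s in Ioo a (a + 1), W (u s))
          + ∫ s in Ioo a (a + 1), (iteratedDeriv (m + 2) u s) ^ 2) := by
  obtain ⟨A, hApos, hA⟩ := interp m 1 one_pos
  set r : ℝ := min (1 / 2) (1 / (16 * (4 * A + 1))) with hr
  have hrpos : 0 < r := lt_min (by norm_num) (by positivity)
  have hr2 : r ≤ 1 / 2 := min_le_left _ _
  set c : ℝ := min 1 (r / 16) with hc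
  have hcpos : 0 < c := lt_min one_pos (by positivity)
  have hc1 : c ≤ 1 := min_le_left _ _
  set K1 : ℝ := 2 + 2 / c with hK1
  have hK1pos : 0 < K1 := by positivity
  refine ⟨A * K1 + A + 2, by positivity, ?_⟩
  intro u hu a ℓ hℓ1 hℓ2
  have hucont : Continuous u := hu.continuous
  set F := ∫ s in Ioo a (a + 1), W (u s) with hF
  set Ek := ∫ s in Ioo a (a + 1), (iteratedDeriv (m + 2) u s) ^ 2 with hEk
  have hFnn : 0 ≤ F := setIntegral_nonneg measurableSet_Ioo (fun x _ => hWnonneg _)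
  have hEknn : 0 ≤ Ek := setIntegral_nonneg measurableSet_Ioo (fun x _ => sq_nonneg _)
  have hWint : IntegrableOn (fun s => W (u s)) (Ioo a (a + 1)) :=
    contIntegrableOn (hWcont.comp hucont) _ _
  have hℓcont : Continuous (iteratedDeriv ℓ u) :=
    hu.continuous_iteratedDeriv ℓ (cast_le_withTop (by omega))
  -- main bound on the ℓ-th energy given a bound on ∫ u², via interp
  have main : ∀ E : ℝ, (∫ s in Ioo a (a + 1), (u s) ^ 2) ≤ E →
      ∫ s in Ioo a (a + 1), (iteratedDeriv ℓ u s) ^ 2 ≤ A * E + Ek := by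
    intro E hE
    apply integral_sq_le_of_ptwise hℓcont
    intro t ht
    have := hA u hu a ℓ hℓ1 hℓ2 t ht
    have h2 : A * (∫ s in Ioo a (a + 1), (u s) ^ 2) ≤ A * E :=
      mul_le_mul_of_nonneg_left hE hApos.le
    rw [← hEk] at this
    linarith
  by_cases hcaseA : ∃ t0 ∈ Ioo a (a + 1), |u t0| ≤ 1 / 2
  · -- Case A
    obtain ⟨t0, ht0mem, ht0⟩ := hcaseA
    have hE0 : (∫ s in Ioo a (a + 1), (u s) ^ 2) ≤ 2 * F + 2 := by
      have hpt : ∀ s ∈ Ioo a (a + 1), (u s) ^ 2 ≤ 2 * W (u s) + 2 := by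
        intro s _
        have := hH2 (u s)
        rcases le_total ((u s + 1) ^ 2) ((u s - 1) ^ 2) with h' | h'
        · rw [min_eq_left h'] at this; nlinarith [sq_nonneg (u s + 2)]
        · rw [min_eq_right h'] at this; nlinarith [sq_nonneg (u s - 2)]
      have h1 : (∫ s in Ioo a (a + 1), (u s) ^ 2) ≤
          ∫ s in Ioo a (a + 1), (2 * W (u s) + 2) := by
        apply setIntegral_mono_on (contIntegrableOn (hucont.pow 2) _ _)
        · exact ((hWint.const_mul 2).add (integrableOn_const
            (by simp [Real.volume_Ioo])))
        · exact measurableSet_Ioo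
        · exact hpt
      have h2 : ∫ s in Ioo a (a + 1), (2 * W (u s) + 2) = 2 * F + 2 := by
        rw [integral_add (hWint.const_mul 2)
          (integrableOn_const (by simp [Real.volume_Ioo])),
          integral_const_mul, setIntegral_const, measureReal_def, Real.volume_Ioo,
          show a + 1 - a = 1 by ring, ENNReal.ofReal_one, ENNReal.toReal_one, one_smul]
      linarith
    -- the energy F + Ek is at least c
    have hckey : c ≤ F + Ek := by
      by_contra hlt
      push_neg at hlt
      have hF1 : F < 1 := by linarith [hEknn, hc1]
      have hEk1 : Ek < 1 := by linarith [hFnn, hc1]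
      have hsup : ∀ t ∈ Icc a (a + 1), (deriv u t) ^ 2 ≤ 4 * A + 1 := by
        intro t ht
        have := hA u hu a 1 le_rfl (by omega) t ht
        rw [iteratedDeriv_one] at this
        have h2 : A * (∫ s in Ioo a (a + 1), (u s) ^ 2) ≤ A * (2 * F + 2) :=
          mul_le_mul_of_nonneg_left hE0 hApos.le
        rw [← hEk] at this
        nlinarith
      -- choose the side interval
      have hd : Differentiable ℝ u := by
        have hcast := cast_le_withTop (show 1 ≤ m + 2 by omega)
        exact hu.differentiable (by simp)
      set b0 : ℝ := if t0 ≤ a + 1 / 2 then t0 else t0 - r with hb0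
      have hJsub : Ioo b0 (b0 + r) ⊆ Ioo a (a + 1) := by
        rcases le_or_gt t0 (a + 1 / 2) with h' | h'
        · rw [hb0, if_pos h']
          apply Ioo_subset_Ioo (le_of_lt ht0mem.1) (by linarith)
        · rw [hb0, if_neg (not_le.2 h')]
          apply Ioo_subset_Ioo (by linarith) (by linarith [ht0mem.2, hrpos])
      have hdist : ∀ t ∈ Ioo b0 (b0 + r), (t - t0) ^ 2 ≤ r ^ 2 := by
        intro t htmem
        rcases le_or_gt t0 (a + 1 / 2) with h' | h'
        · rw [hb0, if_pos h'] at htmem; nlinarith [htmem.1, htmem.2]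
        · rw [hb0, if_neg (not_le.2 h')] at htmem; nlinarith [htmem.1, htmem.2]
      have hWlow : ∀ t ∈ Ioo b0 (b0 + r), (1 : ℝ) / 16 ≤ W (u t) := by
        intro t htmem
        have htI : t ∈ Icc a (a + 1) := Ioo_subset_Icc_self (hJsub htmem)
        have ht0I : t0 ∈ Icc a (a + 1) := Ioo_subset_Icc_self ht0mem
        have hsb := slope_bound hd ht0I htI hsup
        have hdist' := hdist t htmem
        have hrsmall : (4 * A + 1) * r ^ 2 ≤ 1 / 16 := by
          have h1 : r ≤ 1 / (16 * (4 * A + 1)) := min_le_right _ _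
          have h2 : 0 < 16 * (4 * A + 1) := by positivity
          have h3 : r * (16 * (4 * A + 1)) ≤ 1 := by
            rw [← le_div_iff₀ h2]; exact h1
          have h4 : r * (4 * A + 1) ≤ 1 / 16 := by nlinarith
          have h5 : r * (r * (4 * A + 1)) ≤ (1 / 2) * (1 / 16) :=
            mul_le_mul hr2 h4 (by positivity) (by norm_num)
          nlinarith [h5]
        have hsq : (u t - u t0) ^ 2 ≤ 1 / 16 := by
          calc (u t - u t0) ^ 2 ≤ (4 * A + 1) * (t - t0) ^ 2 := hsb
            _ ≤ (4 * A + 1) * r ^ 2 := by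
                exact mul_le_mul_of_nonneg_left hdist' (by positivity)
            _ ≤ 1 / 16 := hrsmall
        have habs : |u t0| ≤ 1 / 2 := ht0
        have h3 : |u t - u t0| ≤ 1 / 4 := by
          nlinarith [sq_abs (u t - u t0), sq_nonneg (|u t - u t0| - 1 / 4), hsq]
        have h4 : |u t| ≤ 3 / 4 := by
          have := abs_sub_abs_le_abs_sub (u t) (u t0)
          linarith [habs]
        have hut : (u t) ^ 2 ≤ (3 / 4) ^ 2 := by
          rw [← sq_abs]; exact pow_le_pow_left₀ (abs_nonneg _) h4 2
        have := hH2 (u t)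
        have hminlow : (1 : ℝ) / 16 ≤ min ((u t + 1) ^ 2) ((u t - 1) ^ 2) :=
          le_min (by nlinarith) (by nlinarith)
        linarith
      have hFlow : r / 16 ≤ F := by
        have h1 : ∫ t in Ioo b0 (b0 + r), (1 : ℝ) / 16 ≤
            ∫ t in Ioo b0 (b0 + r), W (u t) := by
          apply setIntegral_mono_on
          · exact integrableOn_const (by simp [Real.volume_Ioo])
          · exact (hWcont.comp hucont).integrableOn_Icc.mono_set Ioo_subset_Icc_self
          · exact measurableSet_Ioo
          · exact hWlow
        rw [setIntegral_const, measureReal_def, Real.volume_Ioo, show b0 + r - b0 = r by ring,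
          ENNReal.toReal_ofReal hrpos.le, smul_eq_mul] at h1
        have h2 : ∫ t in Ioo b0 (b0 + r), W (u t) ≤ F := by
          apply setIntegral_mono_set hWint
          · exact Filter.Eventually.of_forall (fun x => hWnonneg _)
          · exact HasSubset.Subset.eventuallyLE hJsub
        linarith
      have : c ≤ F := le_trans (min_le_right 1 (r / 16)) hFlow
      linarith
    -- conclude case A
    have hE0' : (∫ s in Ioo a (a + 1), (u s) ^ 2) ≤ K1 * (F + Ek) := by
      have h2 : (2 : ℝ) ≤ (2 / c) * (F + Ek) := by
        rw [div_mul_eq_mul_div, le_div_iff₀ hcpos]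
        linarith [hckey]
      calc (∫ s in Ioo a (a + 1), (u s) ^ 2) ≤ 2 * F + 2 := hE0
        _ ≤ 2 * (F + Ek) + (2 / c) * (F + Ek) := by linarith [hEknn, h2]
        _ = K1 * (F + Ek) := by rw [hK1]; ring
    have := main (K1 * (F + Ek)) hE0'
    calc ∫ s in Ioo a (a + 1), (iteratedDeriv ℓ u s) ^ 2 ≤ A * (K1 * (F + Ek)) + Ek := this
      _ ≤ (A * K1 + A + 2) * (F + Ek) := by
          nlinarith [mul_nonneg hApos.le hFnn, mul_nonneg hApos.le hEknn,
            mul_nonneg (mul_nonneg hApos.le hK1pos.le) hEknn, hFnn, hEknn]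
  · -- Case B/C : u stays on one side
    push_neg at hcaseA
    have hside : (∀ t ∈ Ioo a (a + 1), 1 / 2 < u t) ∨ (∀ t ∈ Ioo a (a + 1), u t < -(1 / 2)) := by
      by_cases hB : ∀ t ∈ Ioo a (a + 1), 1 / 2 < u t
      · exact Or.inl hB
      · right
        push_neg at hB
        obtain ⟨t2, ht2mem, ht2⟩ := hB
        have ht2' : u t2 < -(1 / 2) := by
          have h := hcaseA t2 ht2mem
          rcases lt_abs.1 h with h' | h'
          · linarith
          · linarith
        intro t htmem
        by_contra hge
        push_neg at hge
        have ht' : 1 / 2 < u t := by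
          have h := hcaseA t htmem
          rcases lt_abs.1 h with h' | h'
          · exact h'
          · linarith
        -- IVT contradiction
        have hsub : uIcc t t2 ⊆ Ioo a (a + 1) := by
          intro z hz
          have h1 : t ⊓ t2 ≤ z ∧ z ≤ t ⊔ t2 := by rwa [Set.uIcc, Set.mem_Icc] at hz
          exact ⟨lt_of_lt_of_le (lt_min htmem.1 ht2mem.1) h1.1,
            lt_of_le_of_lt h1.2 (max_lt htmem.2 ht2mem.2)⟩
        have h0mem : (0 : ℝ) ∈ uIcc (u t) (u t2) := by
          rw [mem_uIcc]
          right
          constructor <;> linarith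
        obtain ⟨ξ, hξmem, hξ⟩ := intermediate_value_uIcc
          (hucont.continuousOn (s := uIcc t t2)) h0mem
        have := hcaseA ξ (hsub hξmem)
        rw [hξ] at this
        norm_num at this
    obtain ⟨σ, hσsign, hvW⟩ : ∃ σ : ℝ, (σ = 1 ∨ σ = -1) ∧
        ∀ t ∈ Ioo a (a + 1), (u t - σ) ^ 2 ≤ W (u t) := by
      rcases hside with hB | hC
      · refine ⟨1, Or.inl rfl, fun t htmem => ?_⟩
        have h1 := hB t htmem
        have h2 := hH2 (u t)
        have : (u t - 1) ^ 2 ≤ min ((u t + 1) ^ 2) ((u t - 1) ^ 2) :=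
          le_min (by nlinarith) le_rfl
        linarith
      · refine ⟨-1, Or.inr rfl, fun t htmem => ?_⟩
        have h1 := hC t htmem
        have h2 := hH2 (u t)
        have : (u t - (-1)) ^ 2 ≤ min ((u t + 1) ^ 2) ((u t - 1) ^ 2) :=
          le_min (by nlinarith) (by nlinarith)
        linarith
    set v : ℝ → ℝ := fun s => u s - σ with hv
    have hvCD : ContDiff ℝ ((m + 2 : ℕ) : ℕ∞) v := hu.sub contDiff_const
    have hvd : ∀ j : ℕ, iteratedDeriv (j + 1) v = iteratedDeriv (j + 1) u := fun j =>
      iteratedDeriv_succ_sub_const j σ u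
    have hE0v : (∫ s in Ioo a (a + 1), (v s) ^ 2) ≤ F := by
      apply setIntegral_mono_on (contIntegrableOn ((hucont.sub continuous_const).pow 2) _ _)
        hWint measurableSet_Ioo
      exact hvW
    obtain ⟨j, rfl⟩ : ∃ j, ℓ = j + 1 := ⟨ℓ - 1, by omega⟩
    have hEkv : (∫ s in Ioo a (a + 1), (iteratedDeriv (m + 2) v s) ^ 2) = Ek := by
      rw [show m + 2 = (m + 1) + 1 from rfl, hvd (m + 1)]
    have hptv : ∀ t ∈ Icc a (a + 1), (iteratedDeriv (j + 1) u t) ^ 2 ≤ A * F + Ek := by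
      intro t ht
      have := hA v hvCD a (j + 1) (by omega) (by omega) t ht
      rw [hvd j, hEkv] at this
      have h2 : A * (∫ s in Ioo a (a + 1), (v s) ^ 2) ≤ A * F :=
        mul_le_mul_of_nonneg_left hE0v hApos.le
      linarith
    have := integral_sq_le_of_ptwise hℓcont hptv
    calc ∫ s in Ioo a (a + 1), (iteratedDeriv (j + 1) u s) ^ 2 ≤ A * F + Ek := this
      _ ≤ (A * K1 + A + 2) * (F + Ek) := by
          nlinarith [mul_nonneg hApos.le hFnn, mul_nonneg hApos.le hEknn,
            mul_nonneg (mul_nonneg hApos.le hK1pos.le) hFnn,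
            mul_nonneg (mul_nonneg hApos.le hK1pos.le) hEknn, hFnn, hEknn]


/-- Coercivity of the one-dimensional energy on unit intervals
(Corollary of the interpolation inequality): there are constants `q̄_1,…,q̄_{k-1} > 0`
such that whenever `q_ℓ > -q̄_ℓ` for `ℓ ∈ {1,…,k-1}` and `q_k = 1`, there is `δ > 0`
with `∫_I [W(u) + Σ q_ℓ |u^(ℓ)|²] ≥ δ ∫_I [W(u) + Σ |u^(ℓ)|²]` for every open
interval `I` of length `1` and every `u` of class `C^k`. -/
theorem statement5 (k : ℕ) (hk : 1 < k) (W : ℝ → ℝ)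
    (hWcont : Continuous W) (hWnonneg : ∀ s, 0 ≤ W s)
    (hH2 : ∀ s : ℝ, min ((s + 1) ^ 2) ((s - 1) ^ 2) ≤ W s) :
    ∃ qbar : ℕ → ℝ, (∀ ℓ, 1 ≤ ℓ → ℓ ≤ k - 1 → 0 < qbar ℓ) ∧
      ∀ q : ℕ → ℝ, (∀ ℓ, 1 ≤ ℓ → ℓ ≤ k - 1 → -qbar ℓ < q ℓ) → q k = 1 →
        ∃ δ : ℝ, 0 < δ ∧
          ∀ a : ℝ, ∀ u : ℝ → ℝ, ContDiff ℝ (k : ℕ∞) u →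
            δ * ∫ t in Set.Ioo a (a + 1),
                  (W (u t) + ∑ ℓ ∈ Finset.Icc 1 k, (iteratedDeriv ℓ u t) ^ 2) ≤
              ∫ t in Set.Ioo a (a + 1),
                (W (u t) + ∑ ℓ ∈ Finset.Icc 1 k, q ℓ * (iteratedDeriv ℓ u t) ^ 2) := by
  obtain ⟨m, rfl⟩ : ∃ m, k = m + 2 := ⟨k - 2, by omega⟩
  obtain ⟨C, hCpos, hC⟩ := keyLemma m W hWcont hWnonneg hH2
  set Cs : ℝ := (m + 1) * C with hCs
  have hCspos : 0 < Cs := by positivity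
  refine ⟨fun _ => 1 / (2 * Cs), fun ℓ _ _ => by positivity, ?_⟩
  intro q hq hqk
  set δ : ℝ := 1 / (2 * (1 + Cs)) with hδ
  have hδpos : 0 < δ := by positivity
  refine ⟨δ, hδpos, ?_⟩
  intro a u hu
  have hucont : Continuous u := hu.continuous
  have hWuint : IntegrableOn (fun t => W (u t)) (Ioo a (a + 1)) :=
    contIntegrableOn (hWcont.comp hucont) _ _
  have hiDcont : ∀ ℓ ∈ Finset.Icc 1 (m + 2), Continuous (iteratedDeriv ℓ u) := by
    intro ℓ hℓ
    rw [Finset.mem_Icc] at hℓ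
    exact hu.continuous_iteratedDeriv ℓ (cast_le_withTop hℓ.2)
  set E : ℕ → ℝ := fun ℓ => ∫ t in Ioo a (a + 1), (iteratedDeriv ℓ u t) ^ 2 with hE
  set F : ℝ := ∫ t in Ioo a (a + 1), W (u t) with hF
  have hFnn : 0 ≤ F := setIntegral_nonneg measurableSet_Ioo (fun x _ => hWnonneg _)
  have hEnn : ∀ ℓ, 0 ≤ E ℓ := fun ℓ =>
    setIntegral_nonneg measurableSet_Ioo (fun x _ => sq_nonneg _)
  -- split the two integrals
  have h1 : ∫ t in Ioo a (a + 1),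
      (W (u t) + ∑ ℓ ∈ Finset.Icc 1 (m + 2), (iteratedDeriv ℓ u t) ^ 2)
      = F + ∑ ℓ ∈ Finset.Icc 1 (m + 2), E ℓ := by
    rw [integral_add hWuint, integral_finset_sum]
    · intro ℓ hℓ
      exact contIntegrableOn ((hiDcont ℓ hℓ).pow 2) _ _
    · apply integrable_finset_sum
      intro ℓ hℓ
      exact contIntegrableOn ((hiDcont ℓ hℓ).pow 2) _ _
  have h2 : ∫ t in Ioo a (a + 1),
      (W (u t) + ∑ ℓ ∈ Finset.Icc 1 (m + 2), q ℓ * (iteratedDeriv ℓ u t) ^ 2)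
      = F + ∑ ℓ ∈ Finset.Icc 1 (m + 2), q ℓ * E ℓ := by
    rw [integral_add hWuint, integral_finset_sum]
    · congr 1
      apply Finset.sum_congr rfl
      intro ℓ hℓ
      exact integral_const_mul (q ℓ) _
    · intro ℓ hℓ
      exact (contIntegrableOn ((hiDcont ℓ hℓ).pow 2) _ _).const_mul (q ℓ)
    · apply integrable_finset_sum
      intro ℓ hℓ
      exact (contIntegrableOn ((hiDcont ℓ hℓ).pow 2) _ _).const_mul (q ℓ)
  rw [h1, h2]
  -- split off the top term
  have htop : ∀ g : ℕ → ℝ, ∑ ℓ ∈ Finset.Icc 1 (m + 2), g ℓ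
      = (∑ ℓ ∈ Finset.Icc 1 (m + 1), g ℓ) + g (m + 2) :=
    fun g => Finset.sum_Icc_succ_top (by omega) g
  rw [htop, htop]
  set S : ℝ := ∑ ℓ ∈ Finset.Icc 1 (m + 1), E ℓ with hS
  have hSnn : 0 ≤ S := Finset.sum_nonneg (fun ℓ _ => hEnn ℓ)
  have hSle : S ≤ Cs * (F + E (m + 2)) := by
    have hsum : S ≤ ∑ _ℓ ∈ Finset.Icc 1 (m + 1), C * (F + E (m + 2)) := by
      apply Finset.sum_le_sum
      intro ℓ hℓ
      rw [Finset.mem_Icc] at hℓ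
      exact hC u hu a ℓ hℓ.1 hℓ.2
    rw [Finset.sum_const, Nat.card_Icc, nsmul_eq_mul] at hsum
    calc S ≤ ((m + 1 + 1 - 1 : ℕ) : ℝ) * (C * (F + E (m + 2))) := hsum
      _ = Cs * (F + E (m + 2)) := by
          rw [hCs]; push_cast [show m + 1 + 1 - 1 = m + 1 from rfl]; ring
  have hqS : -(1 / (2 * Cs)) * S ≤ ∑ ℓ ∈ Finset.Icc 1 (m + 1), q ℓ * E ℓ := by
    rw [hS, Finset.mul_sum]
    apply Finset.sum_le_sum
    intro ℓ hℓ
    rw [Finset.mem_Icc] at hℓ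
    have hql := hq ℓ hℓ.1 (by omega)
    exact mul_le_mul_of_nonneg_right (le_of_lt hql) (hEnn ℓ)
  have hqktop : q (m + 2) * E (m + 2) = E (m + 2) := by rw [hqk, one_mul]
  rw [hqktop]
  -- final scalar computation
  set Ek := E (m + 2) with hEk
  have hEknn : 0 ≤ Ek := hEnn (m + 2)
  have e1 : δ * (F + (S + Ek)) ≤ δ * ((1 + Cs) * (F + Ek)) := by
    apply mul_le_mul_of_nonneg_left _ hδpos.le
    nlinarith [hSle]
  have e2 : δ * ((1 + Cs) * (F + Ek)) = (F + Ek) / 2 := by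
    rw [hδ]; field_simp
  have e3 : (1 / (2 * Cs)) * S ≤ (F + Ek) / 2 := by
    have := mul_le_mul_of_nonneg_left hSle (by positivity : (0:ℝ) ≤ 1 / (2 * Cs))
    calc (1 / (2 * Cs)) * S ≤ (1 / (2 * Cs)) * (Cs * (F + Ek)) := this
      _ = (F + Ek) / 2 := by field_simp
  linarith [hqS, e1, e2, e3]
end

section
/- Let I ⊂ ℝ be a bounded open interval and let W : ℝ → ℝ be continuous, nonnegative and satisfy (H1) and (H2). Let u_n, u : I → ℝ be measurable functions such that u_n → u in measure on I and ∫_I W(u_n) dt → 0 as n → +∞. Then u(t) ∈ {-1, 1} for almost every t ∈ I and ∫_I |u_n - u|² dt → 0 as n → +∞. -/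
open MeasureTheory Filter Topology

lemma key_real8 (x c : ℝ) (hc : c = 1 ∨ c = -1) :
    (x - c) ^ 2 ≤ 2 * min ((x + 1) ^ 2) ((x - 1) ^ 2) +
      (if 1 ≤ |x - c| then (8 : ℝ) else 0) := by
  rcases le_total ((x + 1) ^ 2) ((x - 1) ^ 2) with h | h
  · rw [min_eq_left h]
    split_ifs with h1
    · rcases hc with rfl | rfl <;>
        nlinarith [sq_nonneg (x + 3), sq_nonneg (x - 3), sq_nonneg (x + 1), sq_nonneg (x - 1)]
    · push_neg at h1; rw [abs_lt] at h1
      rcases hc with rfl | rfl <;> nlinarith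
  · rw [min_eq_right h]
    split_ifs with h1
    · rcases hc with rfl | rfl <;>
        nlinarith [sq_nonneg (x + 3), sq_nonneg (x - 3), sq_nonneg (x + 1), sq_nonneg (x - 1)]
    · push_neg at h1; rw [abs_lt] at h1
      rcases hc with rfl | rfl <;> nlinarith

/-- If `u_n → u` in measure on a bounded open interval `I` and
`∫_I W(u_n) → 0`, then `u ∈ {-1,1}` a.e. on `I` and `u_n → u` in `L²(I)`. -/
theorem statement8 (a b : ℝ) (hab : a < b) (W : ℝ → ℝ)
    (hWcont : Continuous W) (hWnonneg : ∀ s, 0 ≤ W s)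
    (hH1 : ∀ s : ℝ, W s = 0 ↔ s = 1 ∨ s = -1)
    (hH2 : ∀ s : ℝ, min ((s + 1) ^ 2) ((s - 1) ^ 2) ≤ W s)
    (u : ℕ → ℝ → ℝ) (v : ℝ → ℝ)
    (hu : ∀ n, Measurable (u n)) (hv : Measurable v)
    (hmeas : TendstoInMeasure (volume.restrict (Set.Ioo a b)) u atTop v)
    (hW0 : Tendsto (fun n => ∫⁻ t in Set.Ioo a b, ENNReal.ofReal (W (u n t))) atTop (𝓝 0)) :
    (∀ᵐ t ∂volume.restrict (Set.Ioo a b), v t = 1 ∨ v t = -1) ∧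
    Tendsto (fun n =>
        ∫⁻ t in Set.Ioo a b, ENNReal.ofReal ((u n t - v t) ^ 2)) atTop (𝓝 0) := by
  set μ := volume.restrict (Set.Ioo a b) with hμ
  have hWmeas : ∀ n, Measurable fun t => ENNReal.ofReal (W (u n t)) := fun n =>
    ENNReal.measurable_ofReal.comp (hWcont.measurable.comp (hu n))
  -- Step 1: v ∈ {1, -1} a.e.
  obtain ⟨ns, hns, hae⟩ := hmeas.exists_seq_tendsto_ae
  have hsub : Tendsto (fun k => ∫⁻ t, ENNReal.ofReal (W (u (ns k) t)) ∂μ) atTop (𝓝 0) :=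
    hW0.comp hns.tendsto_atTop
  have hlim : ∀ᵐ t ∂μ,
      liminf (fun k => ENNReal.ofReal (W (u (ns k) t))) atTop = ENNReal.ofReal (W (v t)) := by
    filter_upwards [hae] with t ht
    exact ((ENNReal.continuous_ofReal.tendsto _).comp ((hWcont.tendsto _).comp ht)).liminf_eq
  have hfatou := lintegral_liminf_le (μ := μ) (u := atTop)
    (f := fun k t => ENNReal.ofReal (W (u (ns k) t))) (fun k => hWmeas (ns k))
  have h0 : ∫⁻ t, ENNReal.ofReal (W (v t)) ∂μ = 0 := by
    refine le_antisymm ?_ zero_le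
    rw [← lintegral_congr_ae hlim]
    calc ∫⁻ t, liminf (fun k => ENNReal.ofReal (W (u (ns k) t))) atTop ∂μ
        ≤ liminf (fun k => ∫⁻ t, ENNReal.ofReal (W (u (ns k) t)) ∂μ) atTop := hfatou
      _ = 0 := hsub.liminf_eq
  have hveq : ∀ᵐ t ∂μ, v t = 1 ∨ v t = -1 := by
    have := (lintegral_eq_zero_iff
      (ENNReal.measurable_ofReal.comp (hWcont.measurable.comp hv))).mp h0
    filter_upwards [this] with t ht
    have ht' : ENNReal.ofReal (W (v t)) = 0 := ht
    rw [ENNReal.ofReal_eq_zero] at ht'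
    exact (hH1 (v t)).mp (le_antisymm ht' (hWnonneg (v t)))
  refine ⟨hveq, ?_⟩
  -- Step 2: L² convergence
  have hbound : ∀ n, ∫⁻ t, ENNReal.ofReal ((u n t - v t) ^ 2) ∂μ ≤
      2 * (∫⁻ t, ENNReal.ofReal (W (u n t)) ∂μ) +
        8 * μ {t | 1 ≤ dist (u n t) (v t)} := by
    intro n
    have hSmeas : MeasurableSet {t | 1 ≤ dist (u n t) (v t)} :=
      measurableSet_le measurable_const ((hu n).dist hv)
    calc ∫⁻ t, ENNReal.ofReal ((u n t - v t) ^ 2) ∂μ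
        ≤ ∫⁻ t, (2 * ENNReal.ofReal (W (u n t)) +
            ({t | 1 ≤ dist (u n t) (v t)}).indicator (fun _ => (8 : ENNReal)) t) ∂μ := by
          refine lintegral_mono_ae ?_
          filter_upwards [hveq] with t ht
          have hkey := key_real8 (u n t) (v t) ht
          have hmin : min ((u n t + 1) ^ 2) ((u n t - 1) ^ 2) ≤ W (u n t) := hH2 _
          by_cases hmem : t ∈ {t | 1 ≤ dist (u n t) (v t)}
          · rw [Set.indicator_of_mem hmem]
            have hd : (1 : ℝ) ≤ |u n t - v t| := by
              have := hmem; simpa [Real.dist_eq] using this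
            have hle : (u n t - v t) ^ 2 ≤ 2 * W (u n t) + 8 := by
              rw [if_pos hd] at hkey; nlinarith
            calc ENNReal.ofReal ((u n t - v t) ^ 2)
                ≤ ENNReal.ofReal (2 * W (u n t) + 8) := ENNReal.ofReal_le_ofReal hle
              _ = ENNReal.ofReal (2 * W (u n t)) + ENNReal.ofReal 8 := by
                  rw [ENNReal.ofReal_add (mul_nonneg (by norm_num) (hWnonneg _)) (by norm_num)]
              _ = 2 * ENNReal.ofReal (W (u n t)) + 8 := by
                  rw [ENNReal.ofReal_mul (by norm_num)]
                  norm_num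
          · rw [Set.indicator_of_notMem hmem, add_zero]
            have hd : ¬ (1 : ℝ) ≤ |u n t - v t| := by
              simpa [Real.dist_eq] using hmem
            have hle : (u n t - v t) ^ 2 ≤ 2 * W (u n t) := by
              rw [if_neg hd] at hkey; nlinarith
            calc ENNReal.ofReal ((u n t - v t) ^ 2)
                ≤ ENNReal.ofReal (2 * W (u n t)) := ENNReal.ofReal_le_ofReal hle
              _ = 2 * ENNReal.ofReal (W (u n t)) := by
                  rw [ENNReal.ofReal_mul (by norm_num)]; norm_num
      _ = 2 * (∫⁻ t, ENNReal.ofReal (W (u n t)) ∂μ) +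
            8 * μ {t | 1 ≤ dist (u n t) (v t)} := by
          rw [lintegral_add_right _ (measurable_const.indicator hSmeas),
            lintegral_const_mul _ (hWmeas n), lintegral_indicator_const hSmeas]
  have hS : Tendsto (fun n => μ {t | 1 ≤ dist (u n t) (v t)}) atTop (𝓝 0) :=
    by have := hmeas 1 one_pos; simpa only [edist_dist, ENNReal.one_le_ofReal] using this
  have hmaj : Tendsto (fun n => 2 * (∫⁻ t, ENNReal.ofReal (W (u n t)) ∂μ) +
      8 * μ {t | 1 ≤ dist (u n t) (v t)}) atTop (𝓝 0) := by
    have h1 : Tendsto (fun n => 2 * (∫⁻ t, ENNReal.ofReal (W (u n t)) ∂μ)) atTop (𝓝 0) := by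
      have := ENNReal.Tendsto.const_mul (a := 2) hW0 (Or.inr (by norm_num))
      simpa using this
    have h2 : Tendsto (fun n => 8 * μ {t | 1 ≤ dist (u n t) (v t)}) atTop (𝓝 0) := by
      have := ENNReal.Tendsto.const_mul (a := 8) hS (Or.inr (by norm_num))
      simpa using this
    simpa using h1.add h2
  exact tendsto_of_tendsto_of_tendsto_of_le_of_le tendsto_const_nhds hmaj
    (fun n => zero_le) hbound
end
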